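/- arXiv:1412.6298 — 7 statements merged into one kernel-verified Lean document; each statement's English description precedes it below -/
import Mathlib

section
/- Let f : [0,∞) → [0,∞) be continuous, increasing, with f(0)=0 and f(t) > 0 for t > 0, C¹ on (0,∞), and suppose t f'(t) ≤ (1+M) f(t) for all t > 0 with M > 0. Define F(t) = ∫₀ᵗ f. Then t f(t)/F(t) ≤ 2 + M for all t > 0. -/
open Set Real

theorem stmt_4 (f f' : ℝ → ℝ) (M : ℝ) (hM : 0 < M)
    (hcont : ContinuousOn f (Ici 0))
    (hderiv : ∀ t ∈ Ioi (0:ℝ), HasDerivAt f (f' t) t)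
    (hmono : MonotoneOn f (Ici 0))
    (hf0 : f 0 = 0)
    (hpos : ∀ t ∈ Ioi (0:ℝ), 0 < f t)
    (h : ∀ t ∈ Ioi (0:ℝ), t * f' t ≤ (1 + M) * f t)
    (F : ℝ → ℝ) (hF : ∀ t, F t = ∫ τ in (0:ℝ)..t, f τ) :
    ∀ t ∈ Ioi (0:ℝ), t * f t / F t ≤ 2 + M := by
  -- interval integrability
  have hint : ∀ t : ℝ, 0 ≤ t → IntervalIntegrable f MeasureTheory.volume 0 t := by
    intro t ht
    apply ContinuousOn.intervalIntegrable
    apply hcont.mono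
    rw [uIcc_of_le ht]
    exact fun x hx => hx.1
  -- F has derivative f on Ioi 0
  have hFd : ∀ t ∈ Ioi (0:ℝ), HasDerivAt F (f t) t := by
    intro t ht
    have hcf : ContinuousOn f (Ioi 0) := fun x hx =>
      (hderiv x hx).continuousAt.continuousWithinAt
    have hm : StronglyMeasurableAtFilter f (nhds t) :=
      hcf.stronglyMeasurableAtFilter isOpen_Ioi t ht
    have := intervalIntegral.integral_hasDerivAt_right (hint t (le_of_lt ht)) hm
      (hderiv t ht).continuousAt
    exact this.congr_of_eventuallyEq (Filter.Eventually.of_forall fun x => (hF x))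
  -- F continuous on Ici 0
  have hFc : ContinuousOn F (Ici 0) := by
    intro t ht
    have h1 : ContinuousOn (fun u => ∫ τ in (0:ℝ)..u, f τ) (Icc 0 (t + 1)) := by
      rw [show Icc (0:ℝ) (t+1) = uIcc 0 (t+1) from (uIcc_of_le (by linarith [mem_Ici.mp ht])).symm]
      exact intervalIntegral.continuousOn_primitive_interval'
        (hint (t+1) (by linarith [mem_Ici.mp ht])) left_mem_uIcc
    have h2 : ContinuousOn F (Icc 0 (t + 1)) := by
      apply h1.congr; intro x _; exact hF x
    have h3 := h2 t ⟨ht, by linarith [mem_Ici.mp ht]⟩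
    apply h3.mono_of_mem_nhdsWithin
    apply Filter.inter_mem self_mem_nhdsWithin
    exact mem_nhdsWithin_of_mem_nhds (Iic_mem_nhds (by linarith))
  -- F pos on Ioi 0
  have hFpos : ∀ t ∈ Ioi (0:ℝ), 0 < F t := by
    intro t ht
    rw [hF t]
    apply intervalIntegral.intervalIntegral_pos_of_pos_on (hint t (le_of_lt ht))
    · exact fun x hx => hpos x hx.1
    · exact ht
  -- g := (2+M) F - id * f is monotone on Ici 0
  set g : ℝ → ℝ := fun t => (2 + M) * F t - t * f t with hg
  have hgmono : MonotoneOn g (Ici 0) := by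
    apply monotoneOn_of_deriv_nonneg (convex_Ici 0)
    · exact (hFc.const_smul (2+M)).sub (continuousOn_id.mul hcont)
    · intro t ht
      rw [interior_Ici] at ht
      exact (((hFd t ht).const_mul (2+M)).sub
        ((hasDerivAt_id t).mul (hderiv t ht))).differentiableAt.differentiableWithinAt
    · intro t ht
      rw [interior_Ici] at ht
      have hd : HasDerivAt g ((2+M) * f t - (1 * f t + t * f' t)) t :=
        ((hFd t ht).const_mul (2+M)).sub ((hasDerivAt_id t).mul (hderiv t ht))
      rw [hd.deriv]
      have := h t ht
      have hft := hpos t ht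
      nlinarith
  intro t ht
  have h0 : g 0 = 0 := by
    simp [hg, hF 0, hf0]
  have := hgmono (mem_Ici.mpr le_rfl) (mem_Ici.mpr (le_of_lt (mem_Ioi.mp ht))) (le_of_lt ht)
  rw [h0] at this
  have hFt := hFpos t ht
  rw [div_le_iff₀ hFt]
  simp only [hg] at this
  linarith
end

section
/- Let f satisfy the Keller–Osserman-type setup: f increasing, C¹ on (0,∞), f(0)=0, with (1+m) f(t) ≤ t f'(t) ≤ (1+M) f(t) for all t > 0, where 0 < m < M, and F(t) = ∫₀ᵗ f. Then the integral φ(u) := ∫ᵤ^∞ dt/√(F(t)) is finite for every u > 0. -/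
open Set Real MeasureTheory

theorem stmt_5 (f f' : ℝ → ℝ) (m M : ℝ) (hm : 0 < m) (hmM : m < M)
    (hcont : ContinuousOn f (Ici 0))
    (hderiv : ∀ t ∈ Ioi (0:ℝ), HasDerivAt f (f' t) t)
    (hmono : MonotoneOn f (Ici 0))
    (hf0 : f 0 = 0)
    (hpos : ∀ t ∈ Ioi (0:ℝ), 0 < f t)
    (h : ∀ t ∈ Ioi (0:ℝ), (1 + m) * f t ≤ t * f' t ∧ t * f' t ≤ (1 + M) * f t)
    (F : ℝ → ℝ) (hF : ∀ t, F t = ∫ τ in (0:ℝ)..t, f τ) :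
    ∀ u ∈ Ioi (0:ℝ), IntegrableOn (fun t => 1 / Real.sqrt (F t)) (Ioi u) := by
  have hFeq : F = fun x => ∫ τ in (0:ℝ)..x, f τ := funext hF
  have hfint : ∀ b : ℝ, 0 ≤ b → IntervalIntegrable f volume 0 b := by
    intro b hb
    apply ContinuousOn.intervalIntegrable
    apply hcont.mono
    rw [uIcc_of_le hb]
    exact fun x hx => hx.1
  -- derivative of F
  have hFd : ∀ t ∈ Ioi (0:ℝ), HasDerivAt F (f t) t := by
    intro t ht
    rw [hFeq]
    refine intervalIntegral.integral_hasDerivAt_right (hfint t (le_of_lt ht)) ?_ ?_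
    · exact (hcont.mono (fun x hx => le_of_lt hx)).stronglyMeasurableAtFilter isOpen_Ioi t ht
    · exact hcont.continuousAt (Ici_mem_nhds ht)
  -- continuity of F
  have hFc : ∀ b : ℝ, 0 ≤ b → ContinuousOn F (Icc 0 b) := by
    intro b hb
    rw [hFeq]
    have hi : IntegrableOn f (uIcc 0 b) volume := by
      rw [uIcc_of_le hb]
      exact (hcont.mono (fun x hx => hx.1)).integrableOn_Icc
    have := intervalIntegral.continuousOn_primitive_interval hi
    rwa [uIcc_of_le hb] at this
  have hF0 : F 0 = 0 := by simp [hF]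
  -- positivity of F
  have hFpos : ∀ t : ℝ, 0 < t → 0 < F t := by
    intro t ht
    have hs : StrictMonoOn F (Icc 0 t) := by
      apply strictMonoOn_of_deriv_pos (convex_Icc 0 t) (hFc t ht.le)
      intro x hx
      rw [interior_Icc] at hx
      rw [(hFd x hx.1).deriv]
      exact hpos x hx.1
    have := hs ⟨le_refl 0, ht.le⟩ ⟨ht.le, le_refl t⟩ ht
    linarith [hF0 ▸ this]
  set q : ℝ := 2 + m with hq
  have hq0 : (0:ℝ) < q := by simp only [hq]; linarith
  -- key differential inequality: q * F t ≤ t * f t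
  have hG : ∀ t : ℝ, 0 ≤ t → q * F t ≤ t * f t := by
    intro t ht
    rcases eq_or_lt_of_le ht with h0 | h0
    · simp [← h0, hf0, hF0]
    set G : ℝ → ℝ := fun x => x * f x - q * F x with hGdef
    have hGd : ∀ x ∈ Ioo (0:ℝ) t, HasDerivAt G (x * f' x - (1 + m) * f x) x := by
      intro x hx
      have h1 : HasDerivAt (fun y => y * f y) (1 * f x + x * f' x) x :=
        (hasDerivAt_id x).mul (hderiv x hx.1)
      have h2 := (hFd x hx.1).const_mul q
      have h3 := h1.sub h2
      refine h3.congr_deriv ?_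
      rw [hq]; ring
    have hGc : ContinuousOn G (Icc 0 t) := by
      apply ContinuousOn.sub
      · exact continuousOn_id.mul (hcont.mono (fun x hx => hx.1))
      · exact continuousOn_const.mul (hFc t ht)
    have hmonoG : MonotoneOn G (Icc 0 t) := by
      apply monotoneOn_of_deriv_nonneg (convex_Icc 0 t) hGc
      · intro x hx
        rw [interior_Icc] at hx
        exact (hGd x hx).differentiableAt.differentiableWithinAt
      · intro x hx
        rw [interior_Icc] at hx
        rw [(hGd x hx).deriv]
        have := (h x hx.1).1
        linarith
    have hle := hmonoG ⟨le_refl 0, ht⟩ ⟨ht, le_refl t⟩ ht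
    have hG0 : G 0 = 0 := by simp [hGdef, hf0, hF0]
    rw [hG0] at hle
    have h2 : (0:ℝ) ≤ t * f t - q * F t := by simpa [hGdef] using hle
    linarith
  -- growth bound
  intro u hu
  have hu0 : (0:ℝ) < u := hu
  have hFu : 0 < F u := hFpos u hu0
  have hsu : 0 < Real.sqrt (F u) := Real.sqrt_pos.mpr hFu
  have key : ∀ t : ℝ, u ≤ t → F u * (t / u) ^ q ≤ F t := by
    intro t htu
    have ht0 : 0 < t := lt_of_lt_of_le hu0 htu
    rcases eq_or_lt_of_le htu with rfl | hlt
    · rw [div_self hu0.ne', Real.one_rpow, mul_one]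
    set H : ℝ → ℝ := fun x => Real.log (F x) - q * Real.log x with hHdef
    have hHd : ∀ x ∈ Ioo u t, HasDerivAt H (f x / F x - q * x⁻¹) x := by
      intro x hx
      have hx0 : 0 < x := lt_trans hu0 hx.1
      have h1 : HasDerivAt (fun y => Real.log (F y)) (f x / F x) x :=
        (hFd x hx0).log (hFpos x hx0).ne'
      exact h1.sub (HasDerivAt.const_mul q (Real.hasDerivAt_log hx0.ne'))
    have hHc : ContinuousOn H (Icc u t) := by
      apply ContinuousOn.sub
      · apply ContinuousOn.log
        · exact (hFc t ht0.le).mono (fun x hx => ⟨le_trans hu0.le hx.1, hx.2⟩)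
        · exact fun x hx => (hFpos x (lt_of_lt_of_le hu0 hx.1)).ne'
      · apply continuousOn_const.mul
        apply Real.continuousOn_log.mono
        intro x hx
        exact (lt_of_lt_of_le hu0 hx.1).ne'
    have hHm : MonotoneOn H (Icc u t) := by
      apply monotoneOn_of_deriv_nonneg (convex_Icc u t) hHc
      · intro x hx
        rw [interior_Icc] at hx
        exact (hHd x hx).differentiableAt.differentiableWithinAt
      · intro x hx
        rw [interior_Icc] at hx
        rw [(hHd x hx).deriv]
        have hx0 : 0 < x := lt_trans hu0 hx.1
        have hFx := hFpos x hx0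
        have hGx := hG x hx0.le
        have h2 : q / x ≤ f x / F x := by
          rw [div_le_div_iff₀ hx0 hFx]
          linarith [mul_comm x (f x)]
        have := sub_nonneg.mpr h2
        simpa [div_eq_mul_inv] using this
    have hHle := hHm ⟨le_refl u, htu⟩ ⟨htu, le_refl t⟩ htu
    simp only [hHdef] at hHle
    have hFt := hFpos t ht0
    have hlog : Real.log (F u * (t / u) ^ q) ≤ Real.log (F t) := by
      rw [Real.log_mul hFu.ne' (by positivity),
        Real.log_rpow (by positivity), Real.log_div ht0.ne' hu0.ne']
      linarith [mul_sub q (Real.log t) (Real.log u)]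
    exact (Real.log_le_log_iff (by positivity) hFt).mp hlog
  -- conclude integrability
  set p : ℝ := -(q / 2) with hp
  have hplt : p < -1 := by rw [hp, hq]; linarith
  set C : ℝ := u ^ (q / 2) / Real.sqrt (F u) with hC
  have hCpos : 0 < C := div_pos (Real.rpow_pos_of_pos hu0 _) hsu
  have hgint : IntegrableOn (fun t : ℝ => C * t ^ p) (Ioi u) :=
    (integrableOn_Ioi_rpow_of_lt hplt hu0).const_mul C
  have hFcont' : ContinuousOn F (Ioi u) := fun x hx =>
    ((hFd x (lt_trans hu0 hx)).continuousAt).continuousWithinAt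
  have hmeas : AEStronglyMeasurable (fun t => 1 / Real.sqrt (F t))
      (volume.restrict (Ioi u)) := by
    apply ContinuousOn.aestronglyMeasurable _ measurableSet_Ioi
    apply ContinuousOn.div continuousOn_const
    · exact Real.continuous_sqrt.comp_continuousOn hFcont'
    · exact fun x hx => (Real.sqrt_pos.mpr (hFpos x (lt_trans hu0 hx))).ne'
  refine hgint.mono' hmeas ?_
  rw [ae_restrict_iff' measurableSet_Ioi]
  filter_upwards with t ht
  have ht0 : 0 < t := lt_trans hu0 ht
  have hFt := hFpos t ht0
  have hsqt : 0 < Real.sqrt (F t) := Real.sqrt_pos.mpr hFt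
  have hb : (0:ℝ) < t ^ (q / 2) := Real.rpow_pos_of_pos ht0 _
  have ha : (0:ℝ) < u ^ (q / 2) := Real.rpow_pos_of_pos hu0 _
  rw [Real.norm_eq_abs, abs_of_nonneg (by positivity)]
  -- sqrt bound
  have e1 : Real.sqrt ((t / u) ^ q) = (t / u) ^ (q / 2) := by
    rw [Real.sqrt_eq_rpow, ← Real.rpow_mul (by positivity)]
    ring_nf
  have h1 : Real.sqrt (F u) * (t / u) ^ (q / 2) ≤ Real.sqrt (F t) := by
    have := Real.sqrt_le_sqrt (key t ht.le)
    rwa [Real.sqrt_mul hFu.le, e1] at this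
  have e2 : (t / u) ^ (q / 2) = t ^ (q / 2) / u ^ (q / 2) :=
    Real.div_rpow ht0.le hu0.le _
  have hCt : 0 < C * t ^ p := mul_pos hCpos (Real.rpow_pos_of_pos ht0 _)
  rw [div_le_iff₀ hsqt]
  calc (1:ℝ) = C * t ^ p * (Real.sqrt (F u) * (t / u) ^ (q / 2)) := by
        rw [e2, hp, Real.rpow_neg ht0.le, hC]
        field_simp
    _ ≤ C * t ^ p * Real.sqrt (F t) := mul_le_mul_of_nonneg_left h1 hCt.le
end

section
/- With f, F, φ as in the Keller–Osserman setup (f increasing C¹, f(0)=0, (1+m)f(t) ≤ t f'(t) ≤ (1+M)f(t), F antiderivative of f vanishing at 0, φ(u) = ∫ᵤ^∞ dt/√F(t)), the function φ : (0,∞) → (0,∞) is strictly decreasing, tends to +∞ as u → 0⁺, and tends to 0 as u → +∞. -/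
open Set Real MeasureTheory Filter

theorem stmt_6 (f f' : ℝ → ℝ) (m M : ℝ) (hm : 0 < m) (hmM : m < M)
    (hcont : ContinuousOn f (Ici 0))
    (hderiv : ∀ t ∈ Ioi (0:ℝ), HasDerivAt f (f' t) t)
    (hmono : MonotoneOn f (Ici 0))
    (hf0 : f 0 = 0)
    (hpos : ∀ t ∈ Ioi (0:ℝ), 0 < f t)
    (h : ∀ t ∈ Ioi (0:ℝ), (1 + m) * f t ≤ t * f' t ∧ t * f' t ≤ (1 + M) * f t)
    (F φ : ℝ → ℝ) (hF : ∀ t, F t = ∫ τ in (0:ℝ)..t, f τ)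
    (hφ : ∀ u, φ u = ∫ t in Ioi u, 1 / Real.sqrt (F t)) :
    (∀ u ∈ Ioi (0:ℝ), 0 < φ u) ∧
    StrictAntiOn φ (Ioi 0) ∧
    Tendsto φ (nhdsWithin 0 (Ioi 0)) atTop ∧
    Tendsto φ atTop (nhds 0) := by
  have hf1 : 0 < f 1 := hpos 1 (by norm_num)
  have hfnn : ∀ t, 0 ≤ t → 0 ≤ f t := fun t ht => hf0 ▸ hmono self_mem_Ici ht ht
  -- f is interval integrable on any [a,b] ⊆ [0,∞)
  have hfint : ∀ a b : ℝ, 0 ≤ a → 0 ≤ b → IntervalIntegrable f volume a b := by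
    intro a b ha hb
    apply ContinuousOn.intervalIntegrable
    apply hcont.mono
    intro x hx
    rcases le_total a b with hab | hab
    · rw [uIcc_of_le hab] at hx; exact le_trans ha hx.1
    · rw [uIcc_of_ge hab] at hx; exact le_trans hb hx.1
  -- ratio monotonicity : t ↦ f t * t ^ (-(1+m)) is monotone on (0, ∞)
  have hratio : ∀ a b : ℝ, 0 < a → a ≤ b →
      f a * a ^ (-(1+m)) ≤ f b * b ^ (-(1+m)) := by
    intro a b ha hab
    have hsub : Icc a b ⊆ Ioi 0 := fun x hx => lt_of_lt_of_le ha hx.1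
    have hd : ∀ t ∈ Ioi (0:ℝ), HasDerivAt (fun t => f t * t ^ (-(1+m)))
        (f' t * t ^ (-(1+m)) + f t * (-(1+m) * t ^ (-(1+m) - 1))) t := by
      intro t ht
      exact (hderiv t ht).mul (Real.hasDerivAt_rpow_const (Or.inl (ne_of_gt ht)))
    have hmono' : MonotoneOn (fun t => f t * t ^ (-(1+m))) (Icc a b) := by
      apply monotoneOn_of_deriv_nonneg (convex_Icc a b)
      · intro x hx
        exact (hd x (hsub hx)).continuousAt.continuousWithinAt
      · intro x hx
        rw [interior_Icc] at hx
        exact ((hd x (hsub (Ioo_subset_Icc_self hx))).differentiableAt).differentiableWithinAt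
      · intro x hx
        rw [interior_Icc] at hx
        have hx0 : (0:ℝ) < x := lt_of_lt_of_le ha hx.1.le
        rw [(hd x hx0).deriv]
        have h1 := (h x hx0).1
        have hxe : x ^ (-(1+m)) = x * x ^ (-(1+m) - 1) := by
          have h2 := Real.rpow_add hx0 1 (-(1+m)-1)
          rw [Real.rpow_one] at h2
          rw [show (1:ℝ) + (-(1+m)-1) = -(1+m) by ring] at h2
          exact h2
        rw [hxe]
        have hxp : (0:ℝ) < x ^ (-(1+m) - 1) := Real.rpow_pos_of_pos hx0 _
        nlinarith [mul_nonneg (sub_nonneg.2 h1) hxp.le]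
    exact hmono' ⟨le_refl a, hab⟩ ⟨hab, le_refl b⟩ hab
  -- pointwise bounds on f
  have hfle : ∀ t : ℝ, 0 < t → t ≤ 1 → f t ≤ f 1 * t ^ (1+m) := by
    intro t ht ht1
    have hr := hratio t 1 ht ht1
    rw [Real.one_rpow, mul_one] at hr
    have hp : (0:ℝ) < t ^ (1+m) := Real.rpow_pos_of_pos ht _
    have h2 : f t * t ^ (-(1+m)) * t ^ (1+m) ≤ f 1 * t ^ (1+m) :=
      mul_le_mul_of_nonneg_right hr hp.le
    rwa [mul_assoc, ← Real.rpow_add ht, show -(1+m) + (1+m) = 0 by ring,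
      Real.rpow_zero, mul_one] at h2
  have hfge : ∀ t : ℝ, 1 ≤ t → f 1 * t ^ (1+m) ≤ f t := by
    intro t ht
    have ht0 : (0:ℝ) < t := lt_of_lt_of_le one_pos ht
    have hr := hratio 1 t one_pos ht
    rw [Real.one_rpow, mul_one] at hr
    have hp : (0:ℝ) < t ^ (1+m) := Real.rpow_pos_of_pos ht0 _
    calc f 1 * t ^ (1+m) ≤ f t * t ^ (-(1+m)) * t ^ (1+m) :=
          mul_le_mul_of_nonneg_right hr hp.le
      _ = f t := by
          rw [mul_assoc, ← Real.rpow_add ht0, show -(1+m) + (1+m) = 0 by ring,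
            Real.rpow_zero, mul_one]
  -- F bounds
  have hFlow : ∀ t : ℝ, 0 < t → (t / 2) * f (t / 2) ≤ F t := by
    intro t ht
    have h2 : (0:ℝ) ≤ t / 2 := by linarith
    have hi1 := hfint 0 (t/2) le_rfl h2
    have hi2 := hfint (t/2) t h2 ht.le
    have key : F t = (∫ τ in (0:ℝ)..(t/2), f τ) + ∫ τ in (t/2)..t, f τ := by
      rw [hF]
      exact (intervalIntegral.integral_add_adjacent_intervals hi1 hi2).symm
    have e1 : 0 ≤ ∫ τ in (0:ℝ)..(t/2), f τ :=
      intervalIntegral.integral_nonneg h2 (fun x hx => hfnn x hx.1)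
    have e2 : (t/2) * f (t/2) ≤ ∫ τ in (t/2)..t, f τ := by
      have hc : ∫ τ in (t/2)..t, f (t/2) ≤ ∫ τ in (t/2)..t, f τ := by
        apply intervalIntegral.integral_mono_on (by linarith) intervalIntegrable_const hi2
        intro x hx
        exact hmono h2 (le_trans h2 hx.1) hx.1
      rw [intervalIntegral.integral_const, smul_eq_mul] at hc
      calc (t/2) * f (t/2) = (t - t/2) * f (t/2) := by ring
        _ ≤ _ := hc
    linarith
  have hFpos : ∀ t : ℝ, 0 < t → 0 < F t := by
    intro t ht
    have h2 : 0 < t / 2 := by linarith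
    have := hpos (t/2) h2
    exact lt_of_lt_of_le (by positivity) (hFlow t ht)
  have hFub : ∀ t : ℝ, 0 < t → t ≤ 1 → F t ≤ f 1 * t ^ (2+m) := by
    intro t ht ht1
    have e1 : F t ≤ t * f t := by
      rw [hF]
      have hc : ∫ τ in (0:ℝ)..t, f τ ≤ ∫ τ in (0:ℝ)..t, f t := by
        apply intervalIntegral.integral_mono_on ht.le (hfint 0 t le_rfl ht.le)
          intervalIntegrable_const
        intro x hx
        exact hmono hx.1 ht.le hx.2
      rw [intervalIntegral.integral_const, smul_eq_mul, sub_zero] at hc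
      exact hc
    have e2 : t * f t ≤ t * (f 1 * t ^ (1+m)) :=
      mul_le_mul_of_nonneg_left (hfle t ht ht1) ht.le
    have e3 : t * (f 1 * t ^ (1+m)) = f 1 * t ^ (2+m) := by
      have h2 := Real.rpow_add ht 1 (1+m)
      rw [Real.rpow_one] at h2
      rw [show (1:ℝ) + (1+m) = 2 + m by ring] at h2
      rw [h2]; ring
    linarith
  have hFlb : ∀ t : ℝ, 2 ≤ t → f 1 * (t/2) ^ (2+m) ≤ F t := by
    intro t ht
    have ht0 : (0:ℝ) < t := by linarith
    have h21 : (1:ℝ) ≤ t / 2 := by linarith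
    have h20 : (0:ℝ) < t / 2 := by linarith
    have e1 : f 1 * (t/2) ^ (1+m) ≤ f (t/2) := hfge (t/2) h21
    have e2 : f 1 * (t/2) ^ (2+m) = (t/2) * (f 1 * (t/2) ^ (1+m)) := by
      have h2 := Real.rpow_add h20 1 (1+m)
      rw [Real.rpow_one] at h2
      rw [show (1:ℝ) + (1+m) = 2 + m by ring] at h2
      rw [h2]; ring
    calc f 1 * (t/2) ^ (2+m) = (t/2) * (f 1 * (t/2) ^ (1+m)) := e2
      _ ≤ (t/2) * f (t/2) := mul_le_mul_of_nonneg_left e1 h20.le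
      _ ≤ F t := hFlow t ht0
  -- the integrand
  set g : ℝ → ℝ := fun t => 1 / Real.sqrt (F t) with hg_def
  have hgpos : ∀ t : ℝ, 0 < t → 0 < g t := by
    intro t ht
    have := hFpos t ht
    positivity
  have hFcont : ContinuousOn F (Ioi 0) := by
    intro t ht
    have hFd : HasDerivAt F (f t) t := by
      have hFeq : F = fun s => ∫ τ in (0:ℝ)..s, f τ := funext hF
      rw [hFeq]
      have hct : ContinuousAt f t := hcont.continuousAt (Ici_mem_nhds ht)
      exact intervalIntegral.integral_hasDerivAt_right (hfint 0 t le_rfl ht.le)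
        (ContinuousOn.stronglyMeasurableAtFilter isOpen_Ioi (hcont.mono Ioi_subset_Ici_self)
          t ht) hct
    exact hFd.continuousAt.continuousWithinAt
  have hgcont : ContinuousOn g (Ioi 0) := by
    apply ContinuousOn.div continuousOn_const
      (Real.continuous_sqrt.comp_continuousOn hFcont)
    intro t ht
    exact ne_of_gt (Real.sqrt_pos.2 (hFpos t ht))
  have hsqrtinv : ∀ s : ℝ, 0 < s →
      (Real.sqrt (f 1 * s ^ (2+m)))⁻¹ = (Real.sqrt (f 1))⁻¹ * s ^ (-((2+m)/2)) := by
    intro s hs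
    have e1 : Real.sqrt (s ^ (2+m)) = s ^ ((2+m)/2) := by
      rw [Real.sqrt_eq_rpow, ← Real.rpow_mul hs.le]
      congr 1
      ring
    rw [Real.sqrt_mul hf1.le, e1, mul_inv, ← Real.rpow_neg hs.le]
  have hgbound : ∀ t : ℝ, 2 ≤ t →
      g t ≤ (Real.sqrt (f 1))⁻¹ * 2 ^ ((2+m)/2) * t ^ (-((2+m)/2)) := by
    intro t ht
    have ht0 : (0:ℝ) < t := by linarith
    have h20 : (0:ℝ) < t / 2 := by linarith
    have hFt := hFpos t ht0
    have e1 : g t ≤ (Real.sqrt (f 1 * (t/2) ^ (2+m)))⁻¹ := by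
      rw [hg_def]
      simp only [one_div]
      apply inv_anti₀
      · apply Real.sqrt_pos.2
        positivity
      · exact Real.sqrt_le_sqrt (hFlb t ht)
    have e2 : (Real.sqrt (f 1 * (t/2) ^ (2+m)))⁻¹
        = (Real.sqrt (f 1))⁻¹ * 2 ^ ((2+m)/2) * t ^ (-((2+m)/2)) := by
      rw [hsqrtinv (t/2) h20]
      have e3 : (t/2) ^ (-((2+m)/2)) = 2 ^ ((2+m)/2) * t ^ (-((2+m)/2)) := by
        rw [Real.div_rpow ht0.le (by norm_num : (0:ℝ) ≤ 2),
          Real.rpow_neg (by norm_num : (0:ℝ) ≤ 2), division_def, inv_inv, mul_comm]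
      rw [e3, ← mul_assoc]
    rw [e2] at e1
    exact e1
  have hgint : ∀ u : ℝ, 0 < u → IntegrableOn g (Ioi u) := by
    intro u hu
    set v : ℝ := max u 2 with hv_def
    have huv : u ≤ v := le_max_left _ _
    have hv2 : (2:ℝ) ≤ v := le_max_right _ _
    have hv0 : (0:ℝ) < v := by linarith
    have h1 : IntegrableOn g (Ioc u v) := by
      apply IntegrableOn.mono_set _ Ioc_subset_Icc_self
      apply ContinuousOn.integrableOn_Icc
      apply hgcont.mono
      intro x hx
      exact lt_of_lt_of_le hu hx.1
    have h2 : IntegrableOn g (Ioi v) := by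
      have hint : IntegrableOn
          (fun t => (Real.sqrt (f 1))⁻¹ * 2 ^ ((2+m)/2) * t ^ (-((2+m)/2))) (Ioi v) := by
        apply Integrable.const_mul
        exact integrableOn_Ioi_rpow_of_lt (by linarith) hv0
      apply Integrable.mono hint
      · apply (hgcont.mono _).aestronglyMeasurable measurableSet_Ioi
        intro x hx
        exact lt_trans hv0 hx
      · rw [ae_restrict_iff' measurableSet_Ioi]
        apply Eventually.of_forall
        intro t ht
        have ht2 : (2:ℝ) ≤ t := le_trans hv2 (le_of_lt ht)
        have ht0 : (0:ℝ) < t := by linarith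
        rw [Real.norm_eq_abs, Real.norm_eq_abs, abs_of_nonneg (le_of_lt (hgpos t ht0)),
          abs_of_nonneg]
        · exact hgbound t ht2
        · positivity
    have : Ioi u = Ioc u v ∪ Ioi v := (Ioc_union_Ioi_eq_Ioi huv).symm
    rw [this]
    exact h1.union h2
  have hφint : ∀ u, φ u = ∫ t in Ioi u, g t := hφ
  -- positivity of φ
  have hmidpos : ∀ u v : ℝ, 0 < u → u < v → 0 < ∫ t in Ioc u v, g t := by
    intro u v hu huv
    rw [← intervalIntegral.integral_of_le huv.le]
    apply intervalIntegral.intervalIntegral_pos_of_pos_on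
    · rw [intervalIntegrable_iff_integrableOn_Ioc_of_le huv.le]
      exact (hgint u hu).mono_set Ioc_subset_Ioi_self
    · intro x hx
      exact hgpos x (lt_trans hu hx.1)
    · exact huv
  have hgnn_ae : ∀ u : ℝ, 0 < u → 0 ≤ᵐ[volume.restrict (Ioi u)] g := by
    intro u hu
    exact (ae_restrict_iff' measurableSet_Ioi).2
      (Eventually.of_forall fun t ht => (hgpos t (lt_trans hu ht)).le)
  have hφpos : ∀ u ∈ Ioi (0:ℝ), 0 < φ u := by
    intro u hu
    rw [hφint u]
    refine lt_of_lt_of_le (hmidpos u (u+1) hu (by linarith)) ?_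
    apply setIntegral_mono_set (hgint u hu) (hgnn_ae u hu)
    exact HasSubset.Subset.eventuallyLE Ioc_subset_Ioi_self
  -- strict antitonicity
  have hsplit : ∀ u v : ℝ, 0 < u → u ≤ v →
      φ u = (∫ t in Ioc u v, g t) + ∫ t in Ioi v, g t := by
    intro u v hu huv
    have hv : 0 < v := lt_of_lt_of_le hu huv
    rw [hφint u, ← MeasureTheory.setIntegral_union (Ioc_disjoint_Ioi le_rfl)
      measurableSet_Ioi ((hgint u hu).mono_set Ioc_subset_Ioi_self) (hgint v hv),
      Ioc_union_Ioi_eq_Ioi huv]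
  have hanti : StrictAntiOn φ (Ioi 0) := by
    intro u hu v hv huv
    rw [hsplit u v hu huv.le, hφint v]
    linarith [hmidpos u v hu huv]
  refine ⟨hφpos, hanti, ?_, ?_⟩
  · -- tendsto atTop as u → 0⁺
    have hexp : -((2+m)/2) + 1 < 0 := by linarith
    have hlb : ∀ u : ℝ, 0 < u → u ≤ 1 →
        (Real.sqrt (f 1))⁻¹ * ((1 - u ^ (-((2+m)/2)+1)) / (-((2+m)/2)+1)) ≤ φ u := by
      intro u hu hu1
      have hsub : Icc u 1 ⊆ Ioi 0 := fun x hx => lt_of_lt_of_le hu hx.1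
      have hcontr : ContinuousOn (fun t : ℝ => (Real.sqrt (f 1))⁻¹ * t ^ (-((2+m)/2)))
          (Icc u 1) := by
        apply ContinuousOn.mul continuousOn_const
        intro x hx
        exact (Real.continuousAt_rpow_const x _
          (Or.inl (ne_of_gt (hsub hx)))).continuousWithinAt
      have e1 : ∫ t in u..(1:ℝ), (Real.sqrt (f 1))⁻¹ * t ^ (-((2+m)/2))
          ≤ ∫ t in u..(1:ℝ), g t := by
        apply intervalIntegral.integral_mono_on hu1
          (hcontr.intervalIntegrable_of_Icc hu1)
          ((hgcont.mono hsub).intervalIntegrable_of_Icc hu1)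
        intro x hx
        have hx0 : (0:ℝ) < x := hsub hx
        have hFub' := hFub x hx0 hx.2
        have hgx : (Real.sqrt (f 1 * x ^ (2+m)))⁻¹ ≤ g x := by
          rw [hg_def]
          simp only [one_div]
          exact inv_anti₀ (Real.sqrt_pos.2 (hFpos x hx0)) (Real.sqrt_le_sqrt hFub')
        calc (Real.sqrt (f 1))⁻¹ * x ^ (-((2+m)/2))
            = (Real.sqrt (f 1 * x ^ (2+m)))⁻¹ := (hsqrtinv x hx0).symm
          _ ≤ g x := hgx
      have e2 : ∫ t in u..(1:ℝ), g t ≤ φ u := by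
        rw [hφint u, intervalIntegral.integral_of_le hu1]
        exact setIntegral_mono_set (hgint u hu) (hgnn_ae u hu)
          (HasSubset.Subset.eventuallyLE Ioc_subset_Ioi_self)
      have e3 : ∫ t in u..(1:ℝ), (Real.sqrt (f 1))⁻¹ * t ^ (-((2+m)/2))
          = (Real.sqrt (f 1))⁻¹ * ((1 - u ^ (-((2+m)/2)+1)) / (-((2+m)/2)+1)) := by
        rw [intervalIntegral.integral_const_mul,
          integral_rpow (Or.inr ⟨ne_of_lt (by linarith : -((2+m)/2) < -1), by
            rw [Set.uIcc_of_le hu1]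
            intro hc
            exact absurd hc.1 (not_le.2 hu)⟩), Real.one_rpow]
      rw [← e3]
      exact le_trans e1 e2
    have hA : Tendsto (fun u : ℝ => u ^ (-((2+m)/2)+1)) (nhdsWithin 0 (Ioi 0)) atTop := by
      have h1 : Tendsto (fun x : ℝ => x ^ (-(-((2+m)/2)+1))) atTop atTop :=
        tendsto_rpow_atTop (by linarith)
      apply (h1.comp tendsto_inv_nhdsGT_zero).congr'
      filter_upwards [self_mem_nhdsWithin] with u hu
      have hu0 : (0:ℝ) < u := hu
      simp only [Function.comp]
      rw [Real.inv_rpow hu0.le, ← Real.rpow_neg hu0.le, neg_neg]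
    have hK : (0:ℝ) < (Real.sqrt (f 1))⁻¹ * (-(-((2+m)/2)+1))⁻¹ := by
      have := Real.sqrt_pos.2 hf1
      have h2 : (0:ℝ) < -(-((2+m)/2)+1) := by linarith
      positivity
    have hB : Tendsto (fun u : ℝ =>
        (Real.sqrt (f 1))⁻¹ * ((1 - u ^ (-((2+m)/2)+1)) / (-((2+m)/2)+1)))
        (nhdsWithin 0 (Ioi 0)) atTop := by
      have h3 : Tendsto (fun u : ℝ => u ^ (-((2+m)/2)+1) + (-1)) (nhdsWithin 0 (Ioi 0)) atTop :=
        tendsto_atTop_add_const_right _ (-1) hA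
      have h4 := h3.const_mul_atTop hK
      apply h4.congr'
      apply Eventually.of_forall
      intro u
      have hne : -((2+m)/2) + 1 ≠ 0 := ne_of_lt hexp
      field_simp
      ring
    apply tendsto_atTop_mono' (nhdsWithin 0 (Ioi 0)) _ hB
    filter_upwards [self_mem_nhdsWithin,
      mem_nhdsWithin_of_mem_nhds (Iio_mem_nhds one_pos)] with u hu hu1
    exact hlb u hu (le_of_lt hu1)
  · -- tendsto to 0 as u → ∞
    have hI : IntegrableOn g (Ioi 1) := hgint 1 one_pos
    have hlim : Tendsto (fun u : ℝ => ∫ t in (1:ℝ)..u, g t) atTop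
        (nhds (∫ t in Ioi 1, g t)) :=
      MeasureTheory.intervalIntegral_tendsto_integral_Ioi 1 hI tendsto_id
    have h0 : Tendsto (fun u : ℝ => (∫ t in Ioi 1, g t) - ∫ t in (1:ℝ)..u, g t)
        atTop (nhds 0) := by
      have h1 := hlim.const_sub (∫ t in Ioi 1, g t)
      simpa using h1
    apply h0.congr'
    filter_upwards [eventually_ge_atTop (1:ℝ)] with u hu
    have h2 : (∫ t in Ioi 1, g t) = (∫ t in Ioc 1 u, g t) + ∫ t in Ioi u, g t := by
      rw [← hφint 1]
      exact hsplit 1 u one_pos hu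
    rw [intervalIntegral.integral_of_le hu, hφint u]
    linarith
end

section
/- With f, F, φ as in the Keller–Osserman setup, there exists a constant C > 0 such that for all u > 0, (1/C) √(u/f(u)) ≤ φ(u) ≤ C √(u/f(u)). -/
open Set Real MeasureTheory

lemma ratioMono (f f' : ℝ → ℝ) (c : ℝ)
    (hderiv : ∀ t ∈ Ioi (0:ℝ), HasDerivAt f (f' t) t)
    (hc : ∀ t ∈ Ioi (0:ℝ), c * f t ≤ t * f' t)
    {a b : ℝ} (ha : 0 < a) (hab : a ≤ b) :
    f a * a ^ (-c) ≤ f b * b ^ (-c) := by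
  have hd : ∀ t ∈ Ioi (0:ℝ), HasDerivAt (fun t => f t * t ^ (-c))
      (f' t * t ^ (-c) + f t * (-c * t ^ (-c - 1))) t := by
    intro t ht
    exact (hderiv t ht).mul (Real.hasDerivAt_rpow_const (Or.inl (ne_of_gt ht)))
  have key : MonotoneOn (fun t => f t * t ^ (-c)) (Icc a b) := by
    apply monotoneOn_of_deriv_nonneg (convex_Icc a b)
    · intro t ht
      exact ((hd t (lt_of_lt_of_le ha ht.1)).continuousAt).continuousWithinAt
    · intro t ht
      rw [interior_Icc] at ht
      exact ((hd t (ha.trans ht.1)).differentiableAt).differentiableWithinAt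
    · intro t ht
      rw [interior_Icc] at ht
      have ht0 : (0:ℝ) < t := ha.trans ht.1
      rw [(hd t ht0).deriv]
      have h1 : (0:ℝ) < t ^ (-c - 1) := Real.rpow_pos_of_pos ht0 _
      have h2 : c * f t * t ^ (-c - 1) ≤ (t * f' t) * t ^ (-c - 1) :=
        mul_le_mul_of_nonneg_right (hc t ht0) h1.le
      have h3 : t ^ (-c) = t * t ^ (-c - 1) := by
        have := Real.rpow_add ht0 1 (-c - 1)
        rw [Real.rpow_one] at this
        rw [← this]; congr 1; ring
      rw [h3]
      nlinarith [h2]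
  exact key ⟨le_refl a, hab⟩ ⟨hab, le_refl b⟩ hab

lemma ratioAnti (f f' : ℝ → ℝ) (c : ℝ)
    (hderiv : ∀ t ∈ Ioi (0:ℝ), HasDerivAt f (f' t) t)
    (hc : ∀ t ∈ Ioi (0:ℝ), t * f' t ≤ c * f t)
    {a b : ℝ} (ha : 0 < a) (hab : a ≤ b) :
    f b * b ^ (-c) ≤ f a * a ^ (-c) := by
  have := ratioMono (fun t => -f t) (fun t => -f' t) c
    (fun t ht => (hderiv t ht).neg)
    (fun t ht => by have := hc t ht; simp only [mul_neg]; linarith) ha hab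
  simp only [neg_mul] at this
  linarith

theorem stmt_7 (f f' : ℝ → ℝ) (m M : ℝ) (hm : 0 < m) (hmM : m < M)
    (hcont : ContinuousOn f (Ici 0))
    (hderiv : ∀ t ∈ Ioi (0:ℝ), HasDerivAt f (f' t) t)
    (hmono : MonotoneOn f (Ici 0))
    (hf0 : f 0 = 0)
    (hpos : ∀ t ∈ Ioi (0:ℝ), 0 < f t)
    (h : ∀ t ∈ Ioi (0:ℝ), (1 + m) * f t ≤ t * f' t ∧ t * f' t ≤ (1 + M) * f t)
    (F φ : ℝ → ℝ) (hF : ∀ t, F t = ∫ τ in (0:ℝ)..t, f τ)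
    (hφ : ∀ u, φ u = ∫ t in Ioi u, 1 / Real.sqrt (F t)) :
    ∃ C : ℝ, 0 < C ∧ ∀ u ∈ Ioi (0:ℝ),
      (1 / C) * Real.sqrt (u / f u) ≤ φ u ∧ φ u ≤ C * Real.sqrt (u / f u) := by
  have hM : 0 < M := hm.trans hmM
  have h2M : (0:ℝ) < 2 + M := by linarith
  have hφ' : ∀ u, φ u = ∫ t in Ioi u, 1 / Real.sqrt (∫ τ in (0:ℝ)..t, f τ) := by
    intro u; rw [hφ]; simp only [hF]
  have hfInt : ∀ t : ℝ, 0 ≤ t → IntervalIntegrable f volume 0 t := by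
    intro t ht
    apply ContinuousOn.intervalIntegrable
    apply hcont.mono
    rw [uIcc_of_le ht]
    exact Icc_subset_Ici_self
  have grow_lb : ∀ a b : ℝ, 0 < a → a ≤ b →
      f a * a ^ (-(1+m)) * b ^ ((1:ℝ)+m) ≤ f b := by
    intro a b ha hab
    have hb : 0 < b := lt_of_lt_of_le ha hab
    have h1 := ratioMono f f' (1+m) hderiv (fun t ht => (h t ht).1) ha hab
    have hb1 : b ^ (-(1+m)) * b ^ ((1:ℝ)+m) = 1 := by
      have hz : (-(1+m)) + ((1:ℝ)+m) = 0 := by ring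
      rw [← Real.rpow_add hb, hz, Real.rpow_zero]
    calc f a * a ^ (-(1+m)) * b ^ ((1:ℝ)+m)
        ≤ f b * b ^ (-(1+m)) * b ^ ((1:ℝ)+m) :=
          mul_le_mul_of_nonneg_right h1 (Real.rpow_nonneg hb.le _)
      _ = f b := by rw [mul_assoc, hb1, mul_one]
  have grow_ub : ∀ a b : ℝ, 0 < a → a ≤ b →
      f b ≤ f a * a ^ (-(1+M)) * b ^ ((1:ℝ)+M) := by
    intro a b ha hab
    have hb : 0 < b := lt_of_lt_of_le ha hab
    have h1 := ratioAnti f f' (1+M) hderiv (fun t ht => (h t ht).2) ha hab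
    have hb1 : b ^ (-(1+M)) * b ^ ((1:ℝ)+M) = 1 := by
      have hz : (-(1+M)) + ((1:ℝ)+M) = 0 := by ring
      rw [← Real.rpow_add hb, hz, Real.rpow_zero]
    calc f b = f b * b ^ (-(1+M)) * b ^ ((1:ℝ)+M) := by rw [mul_assoc, hb1, mul_one]
      _ ≤ f a * a ^ (-(1+M)) * b ^ ((1:ℝ)+M) :=
          mul_le_mul_of_nonneg_right h1 (Real.rpow_nonneg hb.le _)
  have Fub : ∀ t : ℝ, 0 < t → (∫ τ in (0:ℝ)..t, f τ) ≤ t * f t := by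
    intro t ht
    have h1 : (∫ τ in (0:ℝ)..t, f τ) ≤ ∫ τ in (0:ℝ)..t, f t := by
      apply intervalIntegral.integral_mono_on ht.le (hfInt t ht.le)
        intervalIntegrable_const
      intro x hx
      exact hmono hx.1 (hx.1.trans hx.2) hx.2
    simpa using h1
  have Flb : ∀ t : ℝ, 0 < t → t * f t ≤ (2 + M) * ∫ τ in (0:ℝ)..t, f τ := by
    intro t ht
    have hpt : ∀ s ∈ Icc (0:ℝ) t, f t * t ^ (-(1+M)) * s ^ ((1:ℝ)+M) ≤ f s := by
      intro s hs
      rcases eq_or_lt_of_le hs.1 with hs0 | hs0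
      · rw [← hs0, Real.zero_rpow (by linarith : (1:ℝ)+M ≠ 0), hf0, mul_zero]
      · have h1 := ratioAnti f f' (1+M) hderiv (fun τ hτ => (h τ hτ).2) hs0 hs.2
        have hs1 : s ^ (-(1+M)) * s ^ ((1:ℝ)+M) = 1 := by
          have hz : (-(1+M)) + ((1:ℝ)+M) = 0 := by ring
          rw [← Real.rpow_add hs0, hz, Real.rpow_zero]
        calc f t * t ^ (-(1+M)) * s ^ ((1:ℝ)+M)
            ≤ f s * s ^ (-(1+M)) * s ^ ((1:ℝ)+M) :=
              mul_le_mul_of_nonneg_right h1 (Real.rpow_nonneg hs0.le _)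
          _ = f s := by rw [mul_assoc, hs1, mul_one]
    have hint : (∫ s in (0:ℝ)..t, f t * t ^ (-(1+M)) * s ^ ((1:ℝ)+M))
        ≤ ∫ τ in (0:ℝ)..t, f τ := by
      apply intervalIntegral.integral_mono_on ht.le
        ((intervalIntegral.intervalIntegrable_rpow' (by linarith)).const_mul _) (hfInt t ht.le) hpt
    rw [intervalIntegral.integral_const_mul, integral_rpow (Or.inl (by linarith))] at hint
    have hz : (0:ℝ) ^ ((1:ℝ)+M+1) = 0 := Real.zero_rpow (by linarith)
    rw [hz] at hint
    have hpow : t ^ (-(1+M)) * t ^ ((1:ℝ)+M+1) = t := by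
      rw [← Real.rpow_add ht, show -(1+M) + ((1:ℝ)+M+1) = 1 from by ring, Real.rpow_one]
    have : f t * t ^ (-(1+M)) * ((t ^ ((1:ℝ)+M+1) - 0) / (1+M+1)) = t * f t / (2+M) := by
      calc f t * t ^ (-(1+M)) * ((t ^ ((1:ℝ)+M+1) - 0) / (1+M+1))
          = (t ^ (-(1+M)) * t ^ ((1:ℝ)+M+1)) * f t / (1+M+1) := by ring
        _ = t * f t / (2+M) := by
            rw [hpow, show ((1:ℝ)+M+1) = 2+M from by ring]
    rw [this] at hint
    rw [div_le_iff₀ h2M] at hint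
    linarith
  -- choose the constant
  set A : ℝ := (2 / m) * Real.sqrt (2 + M) with hA
  have hApos : 0 < A := by positivity
  refine ⟨max A (M / 2), lt_of_lt_of_le hApos (le_max_left _ _), ?_⟩
  intro u hu
  have hu0 : (0:ℝ) < u := hu
  have hfu : 0 < f u := hpos u hu
  set s := Real.sqrt (u / f u) with hs
  have hsp : 0 < s := Real.sqrt_pos.2 (by positivity)
  set K1 : ℝ := f u * u ^ (-(1+m)) / (2 + M) with hK1
  set K2 : ℝ := f u * u ^ (-(1+M)) with hK2
  have hK1p : 0 < K1 := by
    apply div_pos _ h2M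
    exact mul_pos hfu (Real.rpow_pos_of_pos hu0 _)
  have hK2p : 0 < K2 := mul_pos hfu (Real.rpow_pos_of_pos hu0 _)
  have ptA : ∀ t ∈ Ioi u, K1 * t ^ ((2:ℝ)+m) ≤ ∫ τ in (0:ℝ)..t, f τ := by
    intro t ht
    have htu : u < t := ht
    have ht0 : 0 < t := hu0.trans htu
    have h1 : f u * u ^ (-(1+m)) * t ^ ((1:ℝ)+m) ≤ f t := grow_lb u t hu0 htu.le
    have h2 := Flb t ht0
    have h3 : t * t ^ ((1:ℝ)+m) = t ^ ((2:ℝ)+m) := by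
      nth_rewrite 1 [← Real.rpow_one t]
      rw [← Real.rpow_add ht0]; congr 1; ring
    have h4 : f u * u ^ (-(1+m)) * t ^ ((2:ℝ)+m) ≤ (2+M) * ∫ τ in (0:ℝ)..t, f τ := by
      have h5 := mul_le_mul_of_nonneg_left h1 ht0.le
      calc f u * u ^ (-(1+m)) * t ^ ((2:ℝ)+m)
          = t * (f u * u ^ (-(1+m)) * t ^ ((1:ℝ)+m)) := by rw [← h3]; ring
        _ ≤ t * f t := h5
        _ ≤ _ := h2
    rw [hK1, div_mul_eq_mul_div, div_le_iff₀ h2M]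
    linarith
  have ptB : ∀ t ∈ Ioi u, (∫ τ in (0:ℝ)..t, f τ) ≤ K2 * t ^ ((2:ℝ)+M) := by
    intro t ht
    have htu : u < t := ht
    have ht0 : 0 < t := hu0.trans htu
    have h1 : f t ≤ f u * u ^ (-(1+M)) * t ^ ((1:ℝ)+M) := grow_ub u t hu0 htu.le
    have h3 : t * t ^ ((1:ℝ)+M) = t ^ ((2:ℝ)+M) := by
      nth_rewrite 1 [← Real.rpow_one t]
      rw [← Real.rpow_add ht0]; congr 1; ring
    calc (∫ τ in (0:ℝ)..t, f τ) ≤ t * f t := Fub t ht0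
      _ ≤ t * (f u * u ^ (-(1+M)) * t ^ ((1:ℝ)+M)) :=
          mul_le_mul_of_nonneg_left h1 ht0.le
      _ = K2 * t ^ ((2:ℝ)+M) := by rw [hK2, ← h3]; ring
  have sq1 : ∀ t ∈ Ioi u, 1 / Real.sqrt (∫ τ in (0:ℝ)..t, f τ)
      ≤ (1 / Real.sqrt K1) * t ^ (-((2+m)/2)) := by
    intro t ht
    have ht0 : 0 < t := hu0.trans ht
    have hKt : 0 < K1 * t ^ ((2:ℝ)+m) := mul_pos hK1p (Real.rpow_pos_of_pos ht0 _)
    have h1 : Real.sqrt (K1 * t ^ ((2:ℝ)+m)) ≤ Real.sqrt (∫ τ in (0:ℝ)..t, f τ) :=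
      Real.sqrt_le_sqrt (ptA t ht)
    have h2 : Real.sqrt (K1 * t ^ ((2:ℝ)+m)) = Real.sqrt K1 * t ^ ((2+m)/2) := by
      rw [Real.sqrt_mul hK1p.le, Real.sqrt_eq_rpow (t ^ _), ← Real.rpow_mul ht0.le]
      congr 1
      ring
    calc 1 / Real.sqrt (∫ τ in (0:ℝ)..t, f τ)
        ≤ 1 / Real.sqrt (K1 * t ^ ((2:ℝ)+m)) :=
          one_div_le_one_div_of_le (Real.sqrt_pos.2 hKt) h1
      _ = (1 / Real.sqrt K1) * t ^ (-((2+m)/2)) := by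
          rw [h2, Real.rpow_neg ht0.le]; ring
  have sq2 : ∀ t ∈ Ioi u, (1 / Real.sqrt K2) * t ^ (-((2+M)/2))
      ≤ 1 / Real.sqrt (∫ τ in (0:ℝ)..t, f τ) := by
    intro t ht
    have ht0 : 0 < t := hu0.trans ht
    have hKt : 0 < K1 * t ^ ((2:ℝ)+m) := mul_pos hK1p (Real.rpow_pos_of_pos ht0 _)
    have hFt : 0 < ∫ τ in (0:ℝ)..t, f τ := lt_of_lt_of_le hKt (ptA t ht)
    have h1 : Real.sqrt (∫ τ in (0:ℝ)..t, f τ) ≤ Real.sqrt (K2 * t ^ ((2:ℝ)+M)) :=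
      Real.sqrt_le_sqrt (ptB t ht)
    have h2 : Real.sqrt (K2 * t ^ ((2:ℝ)+M)) = Real.sqrt K2 * t ^ ((2+M)/2) := by
      rw [Real.sqrt_mul hK2p.le, Real.sqrt_eq_rpow (t ^ _), ← Real.rpow_mul ht0.le]
      congr 1
      ring
    calc (1 / Real.sqrt K2) * t ^ (-((2+M)/2))
        = 1 / Real.sqrt (K2 * t ^ ((2:ℝ)+M)) := by
          rw [h2, Real.rpow_neg ht0.le]; ring
      _ ≤ 1 / Real.sqrt (∫ τ in (0:ℝ)..t, f τ) :=
          one_div_le_one_div_of_le (Real.sqrt_pos.2 hFt) h1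
  have e1lt : -((2+m)/2) < (-1:ℝ) := by linarith
  have e2lt : -((2+M)/2) < (-1:ℝ) := by linarith
  have int1 : IntegrableOn (fun t : ℝ => (1 / Real.sqrt K1) * t ^ (-((2+m)/2))) (Ioi u) :=
    (integrableOn_Ioi_rpow_of_lt e1lt hu0).const_mul _
  have int2 : IntegrableOn (fun t : ℝ => (1 / Real.sqrt K2) * t ^ (-((2+M)/2))) (Ioi u) :=
    (integrableOn_Ioi_rpow_of_lt e2lt hu0).const_mul _
  have meas : ContinuousOn (fun t => 1 / Real.sqrt (∫ τ in (0:ℝ)..t, f τ)) (Ioi u) := by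
    intro t ht
    have ht0 : 0 < t := hu0.trans ht
    have hKt : 0 < K1 * t ^ ((2:ℝ)+m) := mul_pos hK1p (Real.rpow_pos_of_pos ht0 _)
    have hFt : 0 < ∫ τ in (0:ℝ)..t, f τ := lt_of_lt_of_le hKt (ptA t ht)
    have hIcc : IntegrableOn f (uIcc (0:ℝ) (t+1)) := by
      rw [uIcc_of_le (by linarith)]
      exact (hcont.mono (Icc_subset_Ici_self)).integrableOn_Icc
    have hFc0 : ContinuousOn (fun x => ∫ τ in (0:ℝ)..x, f τ) (uIcc (0:ℝ) (t+1)) :=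
      intervalIntegral.continuousOn_primitive_interval hIcc
    rw [uIcc_of_le (by linarith : (0:ℝ) ≤ t+1)] at hFc0
    have hFc : ContinuousAt (fun x => ∫ τ in (0:ℝ)..x, f τ) t :=
      hFc0.continuousAt (Icc_mem_nhds ht0 (by linarith))
    have : ContinuousAt (fun x => 1 / Real.sqrt (∫ τ in (0:ℝ)..x, f τ)) t := by
      apply ContinuousAt.div continuousAt_const
        (Real.continuous_sqrt.continuousAt.comp hFc)
      exact ne_of_gt (Real.sqrt_pos.2 hFt)
    exact this.continuousWithinAt
  have measAE : AEStronglyMeasurable (fun t => 1 / Real.sqrt (∫ τ in (0:ℝ)..t, f τ))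
      (volume.restrict (Ioi u)) := meas.aestronglyMeasurable measurableSet_Ioi
  have intF : IntegrableOn (fun t => 1 / Real.sqrt (∫ τ in (0:ℝ)..t, f τ)) (Ioi u) := by
    apply Integrable.mono' int1 measAE
    rw [ae_restrict_iff' measurableSet_Ioi]
    apply ae_of_all
    intro t ht
    rw [Real.norm_eq_abs, abs_of_nonneg (by positivity)]
    exact sq1 t ht
  -- values of the power integrals
  have val1 : (∫ t in Ioi u, (1 / Real.sqrt K1) * t ^ (-((2+m)/2)))
      = (1 / Real.sqrt K1) * ((2/m) * u ^ (-(m/2))) := by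
    rw [MeasureTheory.integral_const_mul, integral_Ioi_rpow_of_lt e1lt hu0]
    congr 1
    rw [show -((2+m)/2) + 1 = -(m/2) by ring, neg_div_neg_eq]
    rw [div_eq_iff (by positivity : (m/2:ℝ) ≠ 0)]
    field_simp
  have val2 : (∫ t in Ioi u, (1 / Real.sqrt K2) * t ^ (-((2+M)/2)))
      = (1 / Real.sqrt K2) * ((2/M) * u ^ (-(M/2))) := by
    rw [MeasureTheory.integral_const_mul, integral_Ioi_rpow_of_lt e2lt hu0]
    congr 1
    rw [show -((2+M)/2) + 1 = -(M/2) by ring, neg_div_neg_eq]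
    rw [div_eq_iff (by positivity : (M/2:ℝ) ≠ 0)]
    field_simp
  have hrne : ∀ c : ℝ, u ^ c ≠ 0 := fun c => (Real.rpow_pos_of_pos hu0 c).ne'
  have sqeq : ∀ x y : ℝ, 0 ≤ x → 0 ≤ y → x^2 = y^2 → x = y := by
    intro x y hx hy hxy
    calc x = Real.sqrt (x^2) := (Real.sqrt_sq hx).symm
      _ = Real.sqrt (y^2) := by rw [hxy]
      _ = y := Real.sqrt_sq hy
  have a4 : s^2 = u / f u := Real.sq_sqrt (by positivity)
  have id1 : (1 / Real.sqrt K1) * u ^ (-(m/2)) = Real.sqrt (2 + M) * s := by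
    apply sqeq _ _ (by positivity) (by positivity)
    have a1 : (1 / Real.sqrt K1)^2 = 1 / K1 := by
      rw [div_pow, one_pow, Real.sq_sqrt hK1p.le]
    have a2 : (u ^ (-(m/2)))^2 = u ^ (-m) := by
      rw [sq, ← Real.rpow_add hu0]; congr 1; ring
    have a3 : (Real.sqrt (2 + M))^2 = 2 + M := Real.sq_sqrt h2M.le
    have e3 : u * u ^ (-(1+m)) = u ^ (-m) := by
      nth_rewrite 1 [← Real.rpow_one u]
      rw [← Real.rpow_add hu0]; congr 1; ring
    rw [mul_pow, mul_pow, a1, a2, a3, a4, hK1, ← e3]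
    field_simp [hfu.ne', hrne (-(1+m))]
  have id2 : (1 / Real.sqrt K2) * u ^ (-(M/2)) = s := by
    apply sqeq _ _ (by positivity) (by positivity)
    have a1 : (1 / Real.sqrt K2)^2 = 1 / K2 := by
      rw [div_pow, one_pow, Real.sq_sqrt hK2p.le]
    have a2 : (u ^ (-(M/2)))^2 = u ^ (-M) := by
      rw [sq, ← Real.rpow_add hu0]; congr 1; ring
    have e3 : u * u ^ (-(1+M)) = u ^ (-M) := by
      nth_rewrite 1 [← Real.rpow_one u]
      rw [← Real.rpow_add hu0]; congr 1; ring
    rw [mul_pow, a1, a2, a4, hK2, ← e3]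
    field_simp [hfu.ne', hrne (-(1+M))]
  have upper : φ u ≤ A * s := by
    rw [hφ' u]
    calc (∫ t in Ioi u, 1 / Real.sqrt (∫ τ in (0:ℝ)..t, f τ))
        ≤ ∫ t in Ioi u, (1 / Real.sqrt K1) * t ^ (-((2+m)/2)) :=
          setIntegral_mono_on intF int1 measurableSet_Ioi sq1
      _ = (1 / Real.sqrt K1) * ((2/m) * u ^ (-(m/2))) := val1
      _ = (2/m) * ((1 / Real.sqrt K1) * u ^ (-(m/2))) := by ring
      _ = (2/m) * (Real.sqrt (2 + M) * s) := by rw [id1]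
      _ = A * s := by rw [hA]; ring
  have lower : (2/M) * s ≤ φ u := by
    rw [hφ' u]
    calc (2/M) * s = (1 / Real.sqrt K2) * ((2/M) * u ^ (-(M/2))) := by
          rw [show (1 / Real.sqrt K2) * ((2/M) * u ^ (-(M/2)))
              = (2/M) * ((1 / Real.sqrt K2) * u ^ (-(M/2))) by ring, id2]
      _ = ∫ t in Ioi u, (1 / Real.sqrt K2) * t ^ (-((2+M)/2)) := val2.symm
      _ ≤ ∫ t in Ioi u, 1 / Real.sqrt (∫ τ in (0:ℝ)..t, f τ) :=
          setIntegral_mono_on int2 intF measurableSet_Ioi sq2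
  constructor
  · have h6 : 1 / max A (M/2) ≤ 2 / M := by
      have h7 : (1:ℝ) / max A (M/2) ≤ 1 / (M/2) :=
        one_div_le_one_div_of_le (by positivity) (le_max_right _ _)
      rwa [one_div_div] at h7
    calc (1 / max A (M/2)) * s ≤ (2/M) * s := mul_le_mul_of_nonneg_right h6 hsp.le
      _ ≤ φ u := lower
  · calc φ u ≤ A * s := upper
      _ ≤ max A (M/2) * s := mul_le_mul_of_nonneg_right (le_max_left _ _) hsp.le
end

section
/- With f, F, φ as in the Keller–Osserman setup and s ∈ (0,1), the condition ∫₁^∞ φ(t)^{1/s} dt < ∞ holds if and only if ∫₁^∞ (t/f(t))^{1/(2s)} dt < ∞. -/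
open Set Real MeasureTheory Topology

lemma ratio_mono {f f' : ℝ → ℝ} {c : ℝ}
    (hderiv : ∀ t ∈ Ioi (0:ℝ), HasDerivAt f (f' t) t)
    (hc : ∀ t ∈ Ioi (0:ℝ), c * f t ≤ t * f' t) :
    MonotoneOn (fun x => f x * x ^ (-c)) (Ioi 0) := by
  have key : ∀ x ∈ Ioi (0:ℝ), HasDerivAt (fun x => f x * x ^ (-c))
      (f' x * x ^ (-c) + f x * (-c * x ^ (-c - 1))) x := by
    intro x hx
    exact (hderiv x hx).mul (Real.hasDerivAt_rpow_const (Or.inl (ne_of_gt hx)))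
  have hdiff : DifferentiableOn ℝ (fun x => f x * x ^ (-c)) (Ioi 0) :=
    fun x hx => ((key x hx).differentiableAt).differentiableWithinAt
  apply monotoneOn_of_deriv_nonneg (convex_Ioi 0) hdiff.continuousOn
    (by rwa [interior_Ioi])
  intro x hx
  rw [interior_Ioi] at hx
  rw [(key x hx).deriv]
  have hx0 : (0:ℝ) < x := hx
  have hA : (0:ℝ) < x ^ (-c) := Real.rpow_pos_of_pos hx0 _
  have he : x ^ (-c - 1) = x ^ (-c) / x := by
    rw [Real.rpow_sub hx0, Real.rpow_one]
  rw [he]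
  have key2 : c * f x ≤ x * f' x := hc x hx
  have : f' x * x ^ (-c) + f x * (-c * (x ^ (-c) / x))
      = (x * f' x - c * f x) * x ^ (-c) / x := by
    field_simp
    ring
  rw [this]
  exact div_nonneg (mul_nonneg (sub_nonneg.2 key2) hA.le) hx0.le

lemma ratio_anti {f f' : ℝ → ℝ} {c : ℝ}
    (hderiv : ∀ t ∈ Ioi (0:ℝ), HasDerivAt f (f' t) t)
    (hc : ∀ t ∈ Ioi (0:ℝ), t * f' t ≤ c * f t) :
    AntitoneOn (fun x => f x * x ^ (-c)) (Ioi 0) := by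
  have key : ∀ x ∈ Ioi (0:ℝ), HasDerivAt (fun x => f x * x ^ (-c))
      (f' x * x ^ (-c) + f x * (-c * x ^ (-c - 1))) x := by
    intro x hx
    exact (hderiv x hx).mul (Real.hasDerivAt_rpow_const (Or.inl (ne_of_gt hx)))
  have hdiff : DifferentiableOn ℝ (fun x => f x * x ^ (-c)) (Ioi 0) :=
    fun x hx => ((key x hx).differentiableAt).differentiableWithinAt
  apply antitoneOn_of_deriv_nonpos (convex_Ioi 0) hdiff.continuousOn
    (by rwa [interior_Ioi])
  intro x hx
  rw [interior_Ioi] at hx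
  rw [(key x hx).deriv]
  have hx0 : (0:ℝ) < x := hx
  have hA : (0:ℝ) < x ^ (-c) := Real.rpow_pos_of_pos hx0 _
  have he : x ^ (-c - 1) = x ^ (-c) / x := by
    rw [Real.rpow_sub hx0, Real.rpow_one]
  rw [he]
  have key2 : x * f' x ≤ c * f x := hc x hx
  have : f' x * x ^ (-c) + f x * (-c * (x ^ (-c) / x))
      = (x * f' x - c * f x) * x ^ (-c) / x := by
    field_simp
    ring
  rw [this]
  exact div_nonpos_of_nonpos_of_nonneg
    (mul_nonpos_of_nonpos_of_nonneg (sub_nonpos.2 key2) hA.le) hx0.le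

lemma ratio_le {f : ℝ → ℝ} {c u t : ℝ} (hu : 0 < u) (hut : u ≤ t)
    (hmono : MonotoneOn (fun x => f x * x ^ (-c)) (Ioi 0)) :
    f u * (t / u) ^ c ≤ f t := by
  have ht : (0:ℝ) < t := lt_of_lt_of_le hu hut
  have h1 : f u * u ^ (-c) ≤ f t * t ^ (-c) := hmono hu (by exact ht) hut
  have h2 : (t / u) ^ c = t ^ c * u ^ (-c) := by
    rw [Real.div_rpow ht.le hu.le, Real.rpow_neg hu.le, div_eq_mul_inv]
  rw [h2]
  have htc : (0:ℝ) < t ^ c := Real.rpow_pos_of_pos ht _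
  have := mul_le_mul_of_nonneg_right h1 htc.le
  calc f u * (t ^ c * u ^ (-c)) = f u * u ^ (-c) * t ^ c := by ring
    _ ≤ f t * t ^ (-c) * t ^ c := this
    _ = f t * (t ^ (-c) * t ^ c) := by ring
    _ = f t := by rw [← Real.rpow_add ht, neg_add_cancel, Real.rpow_zero, mul_one]

lemma ratio_ge {f : ℝ → ℝ} {c u t : ℝ} (hu : 0 < u) (hut : u ≤ t)
    (hanti : AntitoneOn (fun x => f x * x ^ (-c)) (Ioi 0)) :
    f t ≤ f u * (t / u) ^ c := by
  have ht : (0:ℝ) < t := lt_of_lt_of_le hu hut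
  have h1 : f t * t ^ (-c) ≤ f u * u ^ (-c) := hanti hu (by exact ht) hut
  have h2 : (t / u) ^ c = t ^ c * u ^ (-c) := by
    rw [Real.div_rpow ht.le hu.le, Real.rpow_neg hu.le, div_eq_mul_inv]
  rw [h2]
  have htc : (0:ℝ) < t ^ c := Real.rpow_pos_of_pos ht _
  have := mul_le_mul_of_nonneg_right h1 htc.le
  calc f t = f t * (t ^ (-c) * t ^ c) := by
        rw [← Real.rpow_add ht, neg_add_cancel, Real.rpow_zero, mul_one]
    _ = f t * t ^ (-c) * t ^ c := by ring
    _ ≤ f u * u ^ (-c) * t ^ c := this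
    _ = f u * (t ^ c * u ^ (-c)) := by ring

lemma myintInt {f : ℝ → ℝ} (hcont : ContinuousOn f (Ici 0)) {a b : ℝ}
    (ha : 0 ≤ a) (hb : 0 ≤ b) : IntervalIntegrable f volume a b := by
  apply ContinuousOn.intervalIntegrable
  apply hcont.mono
  rcases le_total a b with hab | hab
  · rw [Set.uIcc_of_le hab]; exact fun x hx => le_trans ha hx.1
  · rw [Set.uIcc_of_ge hab]; exact fun x hx => le_trans hb hx.1

lemma Fderiv {f : ℝ → ℝ} (hcont : ContinuousOn f (Ici 0)) {t : ℝ} (ht : 0 < t) :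
    HasDerivAt (fun x => ∫ τ in (0:ℝ)..x, f τ) (f t) t := by
  have hmem : Ici (0:ℝ) ∈ 𝓝 t := Ici_mem_nhds ht
  refine intervalIntegral.integral_hasDerivAt_right (myintInt hcont le_rfl ht.le) ?_ ?_
  · exact AEStronglyMeasurable.stronglyMeasurableAtFilter_of_mem
      (hcont.aestronglyMeasurable measurableSet_Ici) hmem
  · exact hcont.continuousAt hmem

lemma Fcont {f : ℝ → ℝ} (hcont : ContinuousOn f (Ici 0)) :
    ContinuousOn (fun x => ∫ τ in (0:ℝ)..x, f τ) (Ici 0) := by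
  intro x hx
  have hb : x < x + 1 := by linarith
  have h1 : ContinuousOn (fun y => ∫ t in Ioc (0:ℝ) y, f t) (Icc 0 (x+1)) :=
    intervalIntegral.continuousOn_primitive (hcont.mono (fun z hz => hz.1)).integrableOn_Icc
  have h2 : ContinuousOn (fun y => ∫ τ in (0:ℝ)..y, f τ) (Icc 0 (x+1)) := by
    apply h1.congr
    intro y hy
    show (∫ τ in (0:ℝ)..y, f τ) = ∫ t in Ioc (0:ℝ) y, f t
    exact intervalIntegral.integral_of_le hy.1
  have h3 : ContinuousWithinAt (fun y => ∫ τ in (0:ℝ)..y, f τ) (Icc 0 (x+1)) x :=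
    h2 x ⟨hx, by linarith⟩
  apply h3.mono_of_mem_nhdsWithin
  have : Icc (0:ℝ) (x+1) = Ici 0 ∩ Iic (x+1) := (Ici_inter_Iic).symm
  rw [this]
  exact inter_mem_nhdsWithin _ (Iic_mem_nhds hb)

lemma Fub {f f' : ℝ → ℝ} {c : ℝ} (hcont : ContinuousOn f (Ici 0))
    (hderiv : ∀ t ∈ Ioi (0:ℝ), HasDerivAt f (f' t) t)
    (hc : ∀ t ∈ Ioi (0:ℝ), c * f t ≤ t * f' t) {t : ℝ} (ht : 0 ≤ t) :
    (1 + c) * ∫ τ in (0:ℝ)..t, f τ ≤ t * f t := by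
  set P : ℝ → ℝ := fun x => ∫ τ in (0:ℝ)..x, f τ with hP
  set G : ℝ → ℝ := fun x => x * f x - (1 + c) * P x with hG
  have key : ∀ x ∈ Ioi (0:ℝ), HasDerivAt G (1 * f x + x * f' x - (1 + c) * f x) x := by
    intro x hx
    exact ((hasDerivAt_id x).mul (hderiv x hx)).sub ((Fderiv hcont hx).const_mul (1 + c))
  have hGc : ContinuousOn G (Ici 0) :=
    (continuousOn_id.mul hcont).sub ((Fcont hcont).const_smul (1 + c))
  have hmonoG : MonotoneOn G (Ici 0) := by
    apply monotoneOn_of_deriv_nonneg (convex_Ici 0) hGc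
    · rw [interior_Ici]
      exact fun x hx => ((key x hx).differentiableAt).differentiableWithinAt
    · rw [interior_Ici]
      intro x hx
      rw [(key x hx).deriv]
      have := hc x hx
      nlinarith [this]
  have hG0 : G 0 = 0 := by
    simp [hG, hP, intervalIntegral.integral_same]
  have := hmonoG self_mem_Ici ht ht
  rw [hG0] at this
  simp only [hG] at this
  linarith

lemma Flb {f f' : ℝ → ℝ} {c : ℝ} (hcont : ContinuousOn f (Ici 0))
    (hderiv : ∀ t ∈ Ioi (0:ℝ), HasDerivAt f (f' t) t)
    (hc : ∀ t ∈ Ioi (0:ℝ), t * f' t ≤ c * f t) {t : ℝ} (ht : 0 ≤ t) :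
    t * f t ≤ (1 + c) * ∫ τ in (0:ℝ)..t, f τ := by
  set P : ℝ → ℝ := fun x => ∫ τ in (0:ℝ)..x, f τ with hP
  set G : ℝ → ℝ := fun x => (1 + c) * P x - x * f x with hG
  have key : ∀ x ∈ Ioi (0:ℝ), HasDerivAt G ((1 + c) * f x - (1 * f x + x * f' x)) x := by
    intro x hx
    exact ((Fderiv hcont hx).const_mul (1 + c)).sub ((hasDerivAt_id x).mul (hderiv x hx))
  have hGc : ContinuousOn G (Ici 0) :=
    ((Fcont hcont).const_smul (1 + c)).sub (continuousOn_id.mul hcont)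
  have hmonoG : MonotoneOn G (Ici 0) := by
    apply monotoneOn_of_deriv_nonneg (convex_Ici 0) hGc
    · rw [interior_Ici]
      exact fun x hx => ((key x hx).differentiableAt).differentiableWithinAt
    · rw [interior_Ici]
      intro x hx
      rw [(key x hx).deriv]
      have := hc x hx
      nlinarith [this]
  have hG0 : G 0 = 0 := by
    simp [hG, hP, intervalIntegral.integral_same]
  have := hmonoG self_mem_Ici ht ht
  rw [hG0] at this
  simp only [hG] at this
  linarith
theorem stmt_8 (f f' : ℝ → ℝ) (m M s : ℝ) (hm : 0 < m) (hmM : m < M)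
    (hs : s ∈ Ioo (0:ℝ) 1)
    (hcont : ContinuousOn f (Ici 0))
    (hderiv : ∀ t ∈ Ioi (0:ℝ), HasDerivAt f (f' t) t)
    (hmono : MonotoneOn f (Ici 0))
    (hf0 : f 0 = 0)
    (hpos : ∀ t ∈ Ioi (0:ℝ), 0 < f t)
    (h : ∀ t ∈ Ioi (0:ℝ), (1 + m) * f t ≤ t * f' t ∧ t * f' t ≤ (1 + M) * f t)
    (F φ : ℝ → ℝ) (hF : ∀ t, F t = ∫ τ in (0:ℝ)..t, f τ)
    (hφ : ∀ u, φ u = ∫ t in Ioi u, 1 / Real.sqrt (F t)) :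
    IntegrableOn (fun t => φ t ^ (1 / s)) (Ioi 1) ↔
      IntegrableOn (fun t => (t / f t) ^ (1 / (2 * s))) (Ioi 1) := by
  obtain ⟨hs0, hs1⟩ := hs
  have hM0 : (0:ℝ) < M := hm.trans hmM
  have h2m : (0:ℝ) < 2 + m := by linarith
  have h2M : (0:ℝ) < 2 + M := by linarith
  have hFfun : F = fun x => ∫ τ in (0:ℝ)..x, f τ := funext hF
  -- growth comparison facts
  have hfmono : MonotoneOn (fun x => f x * x ^ (-(1+m))) (Ioi 0) :=
    ratio_mono hderiv (fun t ht => (h t ht).1)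
  have hfanti : AntitoneOn (fun x => f x * x ^ (-(1+M))) (Ioi 0) :=
    ratio_anti hderiv (fun t ht => (h t ht).2)
  -- bounds on F
  have hFub : ∀ t : ℝ, 0 ≤ t → (2 + m) * F t ≤ t * f t := by
    intro t ht
    rw [hF, show (2:ℝ) + m = 1 + (1 + m) by ring]
    exact Fub hcont hderiv (fun x hx => (h x hx).1) ht
  have hFlb : ∀ t : ℝ, 0 ≤ t → t * f t ≤ (2 + M) * F t := by
    intro t ht
    rw [hF, show (2:ℝ) + M = 1 + (1 + M) by ring]
    exact Flb hcont hderiv (fun x hx => (h x hx).2) ht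
  have hFpos : ∀ t : ℝ, 0 < t → 0 < F t := by
    intro t ht
    have h1 : 0 < t * f t := mul_pos ht (hpos t ht)
    nlinarith [hFlb t ht.le]
  have hFcont : ContinuousOn F (Ici 0) := hFfun ▸ Fcont hcont
  have hFmono : MonotoneOn F (Ici 0) := by
    rw [hFfun]
    apply monotoneOn_of_deriv_nonneg (convex_Ici 0) (Fcont hcont)
    · rw [interior_Ici]
      exact fun x hx => (Fderiv hcont hx).differentiableAt.differentiableWithinAt
    · rw [interior_Ici]
      intro x hx
      rw [(Fderiv hcont hx).deriv]
      exact (hpos x hx).le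
  -- the comparison function
  set g : ℝ → ℝ := fun u => (u / f u) ^ ((1:ℝ)/2) with hg
  -- integrability of the integrand of φ, and the upper bound
  set K₂ : ℝ := (2/m) * (2+M) ^ ((1:ℝ)/2) with hK₂
  have hK₂pos : 0 < K₂ := by positivity
  set R : ℝ := 2 ^ ((2:ℝ)+M) / (2+m) with hR
  have hRpos : 0 < R := by positivity
  set K₁ : ℝ := R ^ (-((1:ℝ)/2)) with hK₁
  have hK₁pos : 0 < K₁ := by positivity
  have main : ∀ u : ℝ, 1 ≤ u →
      IntegrableOn (fun t => 1 / Real.sqrt (F t)) (Ioi u) ∧ φ u ≤ K₂ * g u := by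
    intro u hu
    have hu0 : (0:ℝ) < u := lt_of_lt_of_le one_pos hu
    have hfu : 0 < f u := hpos u hu0
    set a : ℝ := -(((2:ℝ)+m)/2) with ha_def
    have ha : a < -1 := by rw [ha_def]; linarith
    set D : ℝ := f u / ((2+M) * u ^ ((1:ℝ)+m)) with hD_def
    have hupow : (0:ℝ) < u ^ ((1:ℝ)+m) := Real.rpow_pos_of_pos hu0 _
    have hD : 0 < D := by positivity
    set B : ℝ := D ^ (-((1:ℝ)/2)) with hB_def
    have hB : 0 < B := by positivity
    have hbound : ∀ t ∈ Ioi u, 1 / Real.sqrt (F t) ≤ B * t ^ a := by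
      intro t ht
      have htu : u ≤ t := (le_of_lt ht)
      have ht0 : (0:ℝ) < t := hu0.trans_le htu
      have h1 : f u * (t/u) ^ ((1:ℝ)+m) ≤ f t := ratio_le hu0 htu hfmono
      have h2 : t * f t ≤ (2 + M) * F t := hFlb t ht0.le
      have h3 : D * t ^ ((2:ℝ)+m) ≤ F t := by
        have e1 : (t/u) ^ ((1:ℝ)+m) = t ^ ((1:ℝ)+m) / u ^ ((1:ℝ)+m) :=
          Real.div_rpow ht0.le hu0.le _
        have e2 : t ^ ((2:ℝ)+m) = t * t ^ ((1:ℝ)+m) := by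
          rw [show (2:ℝ)+m = 1+(1+m) by ring, Real.rpow_add ht0, Real.rpow_one]
        rw [hD_def, e2]
        rw [e1] at h1
        have hE2 : (0:ℝ) < (2+M) * u ^ ((1:ℝ)+m) := by positivity
        rw [div_mul_eq_mul_div, div_le_iff₀ hE2]
        calc f u * (t * t ^ ((1:ℝ)+m))
            = f u * (t ^ ((1:ℝ)+m) / u ^ ((1:ℝ)+m)) * t * u ^ ((1:ℝ)+m) := by
              field_simp
          _ ≤ f t * t * u ^ ((1:ℝ)+m) :=
              mul_le_mul_of_nonneg_right
                (mul_le_mul_of_nonneg_right h1 ht0.le) hupow.le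
          _ = t * f t * u ^ ((1:ℝ)+m) := by ring
          _ ≤ (2+M) * F t * u ^ ((1:ℝ)+m) := mul_le_mul_of_nonneg_right h2 hupow.le
          _ = F t * ((2+M) * u ^ ((1:ℝ)+m)) := by ring
      have e3 : Real.sqrt (D * t ^ ((2:ℝ)+m)) = D ^ ((1:ℝ)/2) * t ^ (((2:ℝ)+m)/2) := by
        rw [Real.sqrt_eq_rpow, Real.mul_rpow hD.le (Real.rpow_pos_of_pos ht0 _).le,
          ← Real.rpow_mul ht0.le, show ((2:ℝ)+m) * (1/2) = ((2:ℝ)+m)/2 by ring]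
      have e4 : B * t ^ a = 1 / (D ^ ((1:ℝ)/2) * t ^ (((2:ℝ)+m)/2)) := by
        rw [hB_def, ha_def, Real.rpow_neg hD.le, Real.rpow_neg ht0.le]
        field_simp
      have h4 : 0 < Real.sqrt (D * t ^ ((2:ℝ)+m)) := by
        rw [e3]; positivity
      rw [e4, ← e3]
      exact one_div_le_one_div_of_le h4 (Real.sqrt_le_sqrt h3)
    have hmeasint : AEStronglyMeasurable (fun t => 1 / Real.sqrt (F t))
        (volume.restrict (Ioi u)) := by
      have hsub : Ioi u ⊆ Ici (0:ℝ) := fun x hx => le_of_lt (hu0.trans hx)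
      have : ContinuousOn (fun t => 1 / Real.sqrt (F t)) (Ioi u) := by
        apply continuousOn_const.div
          (Real.continuous_sqrt.comp_continuousOn (hFcont.mono hsub))
        intro x hx
        exact ne_of_gt (Real.sqrt_pos.2 (hFpos x (hu0.trans hx)))
      exact this.aestronglyMeasurable measurableSet_Ioi
    have hintB : IntegrableOn (fun t => B * t ^ a) (Ioi u) :=
      (integrableOn_Ioi_rpow_of_lt ha hu0).const_mul B
    have hint : IntegrableOn (fun t => 1 / Real.sqrt (F t)) (Ioi u) := by
      apply Integrable.mono' hintB hmeasint
      filter_upwards [ae_restrict_mem measurableSet_Ioi] with t ht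
      rw [Real.norm_eq_abs, abs_of_nonneg (by positivity)]
      exact hbound t ht
    refine ⟨hint, ?_⟩
    have hφle : φ u ≤ ∫ t in Ioi u, B * t ^ a := by
      rw [hφ]
      exact setIntegral_mono_on hint hintB measurableSet_Ioi hbound
    have hval : (∫ t in Ioi u, B * t ^ a) = B * ((2/m) * u ^ (-(m/2))) := by
      rw [MeasureTheory.integral_const_mul, integral_Ioi_rpow_of_lt ha hu0,
        show a + 1 = -(m/2) by rw [ha_def]; ring]
      congr 1
      field_simp [ne_of_gt hm]
    have hEpos : (0:ℝ) < (2+M) * u ^ ((1:ℝ)+m) := by positivity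
    have eB : B = ((2+M) ^ ((1:ℝ)/2) * u ^ (((1:ℝ)+m)/2)) / (f u) ^ ((1:ℝ)/2) := by
      rw [hB_def, hD_def, Real.rpow_neg hD.le, Real.div_rpow hfu.le hEpos.le,
        Real.mul_rpow h2M.le hupow.le, ← Real.rpow_mul hu0.le, inv_div,
        show ((1:ℝ)+m) * (1/2) = ((1:ℝ)+m)/2 by ring]
    have eu : u ^ (((1:ℝ)+m)/2) * u ^ (-(m/2)) = u ^ ((1:ℝ)/2) := by
      rw [← Real.rpow_add hu0]
      congr 1
      ring
    have egu : g u = u ^ ((1:ℝ)/2) / (f u) ^ ((1:ℝ)/2) := Real.div_rpow hu0.le hfu.le _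
    have hfpow : (0:ℝ) < (f u) ^ ((1:ℝ)/2) := Real.rpow_pos_of_pos hfu _
    calc φ u ≤ ∫ t in Ioi u, B * t ^ a := hφle
      _ = B * ((2/m) * u ^ (-(m/2))) := hval
      _ = K₂ * g u := by
          rw [eB, hK₂, egu, ← eu]
          field_simp
  have hlow : ∀ u : ℝ, 1 ≤ u → K₁ * g u ≤ φ u := by
    intro u hu
    have hu0 : (0:ℝ) < u := lt_of_lt_of_le one_pos hu
    have hfu : 0 < f u := hpos u hu0
    have h2u : (0:ℝ) < 2 * u := by linarith
    have hint := (main u hu).1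
    have hF2u : 0 < F (2*u) := hFpos _ h2u
    have step1 : (∫ t in Ioc u (2*u), 1 / Real.sqrt (F t)) ≤ φ u := by
      rw [hφ]
      refine setIntegral_mono_set hint ?_ (HasSubset.Subset.eventuallyLE Ioc_subset_Ioi_self)
      exact Filter.Eventually.of_forall (fun t => by positivity)
    have step2 : (∫ _t in Ioc u (2*u), 1 / Real.sqrt (F (2*u)))
        ≤ ∫ t in Ioc u (2*u), 1 / Real.sqrt (F t) := by
      apply setIntegral_mono_on
      · exact integrableOn_const measure_Ioc_lt_top.ne
      · exact hint.mono_set Ioc_subset_Ioi_self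
      · exact measurableSet_Ioc
      · intro t ht
        have ht0 : 0 < t := hu0.trans ht.1
        have hFt : 0 < F t := hFpos t ht0
        apply one_div_le_one_div_of_le (Real.sqrt_pos.2 hFt)
        exact Real.sqrt_le_sqrt (hFmono ht0.le h2u.le ht.2)
    have step3 : (∫ _t in Ioc u (2*u), 1 / Real.sqrt (F (2*u)))
        = u * (1 / Real.sqrt (F (2*u))) := by
      rw [setIntegral_const, Real.volume_real_Ioc_of_le (by linarith), smul_eq_mul]
      norm_num
      left
      ring
    have step4 : F (2*u) ≤ R * (u * f u) := by
      have hA := hFub (2*u) h2u.le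
      have hB2 : f (2*u) ≤ f u * ((2*u)/u) ^ ((1:ℝ)+M) := ratio_ge hu0 (by linarith) hfanti
      have e6 : (2*u)/u = 2 := by field_simp
      rw [e6] at hB2
      have e5 : (2:ℝ)^((2:ℝ)+M) = 2 * 2^((1:ℝ)+M) := by
        rw [show (2:ℝ)+M = 1+(1+M) by ring, Real.rpow_add two_pos, Real.rpow_one]
      have h2pow : (0:ℝ) < 2^((1:ℝ)+M) := by positivity
      have hC : 2*u * f (2*u) ≤ 2*u * (f u * 2^((1:ℝ)+M)) :=
        mul_le_mul_of_nonneg_left hB2 h2u.le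
      rw [hR, e5]
      rw [div_mul_eq_mul_div, le_div_iff₀ h2m]
      nlinarith [hA, hC]
    have step5 : Real.sqrt (F (2*u)) ≤ R^((1:ℝ)/2) * (u^((1:ℝ)/2) * (f u)^((1:ℝ)/2)) := by
      calc Real.sqrt (F (2*u)) ≤ Real.sqrt (R * (u * f u)) := Real.sqrt_le_sqrt step4
        _ = R^((1:ℝ)/2) * (u^((1:ℝ)/2) * (f u)^((1:ℝ)/2)) := by
            rw [Real.sqrt_eq_rpow, Real.mul_rpow hRpos.le (by positivity),
              Real.mul_rpow hu0.le hfu.le]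
    have hrpq : 0 < R^((1:ℝ)/2) * (u^((1:ℝ)/2) * (f u)^((1:ℝ)/2)) := by positivity
    have step6 : u / (R^((1:ℝ)/2) * (u^((1:ℝ)/2) * (f u)^((1:ℝ)/2)))
        ≤ u / Real.sqrt (F (2*u)) :=
      div_le_div_of_nonneg_left hu0.le (Real.sqrt_pos.2 hF2u) step5
    have euu : u ^ ((1:ℝ)/2) * u ^ ((1:ℝ)/2) = u := by
      rw [← Real.rpow_add hu0]
      norm_num
    have egu : g u = u ^ ((1:ℝ)/2) / (f u) ^ ((1:ℝ)/2) := Real.div_rpow hu0.le hfu.le _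
    have step7 : K₁ * g u = u / (R^((1:ℝ)/2) * (u^((1:ℝ)/2) * (f u)^((1:ℝ)/2))) := by
      rw [hK₁, Real.rpow_neg hRpos.le, egu]
      rw [show u / (R^((1:ℝ)/2) * (u^((1:ℝ)/2) * (f u)^((1:ℝ)/2)))
          = (u^((1:ℝ)/2) * u^((1:ℝ)/2)) / (R^((1:ℝ)/2) * (u^((1:ℝ)/2) * (f u)^((1:ℝ)/2)))
        from by rw [euu]]
      have h1 : (0:ℝ) < R^((1:ℝ)/2) := by positivity
      have h2 : (0:ℝ) < u^((1:ℝ)/2) := by positivity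
      have h3 : (0:ℝ) < (f u)^((1:ℝ)/2) := by positivity
      field_simp
    calc K₁ * g u = u / (R^((1:ℝ)/2) * (u^((1:ℝ)/2) * (f u)^((1:ℝ)/2))) := step7
      _ ≤ u / Real.sqrt (F (2*u)) := step6
      _ = u * (1 / Real.sqrt (F (2*u))) := by rw [mul_one_div]
      _ = ∫ _t in Ioc u (2*u), 1 / Real.sqrt (F (2*u)) := step3.symm
      _ ≤ ∫ t in Ioc u (2*u), 1 / Real.sqrt (F t) := step2
      _ ≤ φ u := step1
  -- measurability of both sides
  have hsub01 : Ioi (1:ℝ) ⊆ Ici 0 := fun x hx => mem_Ici.2 (le_of_lt (lt_trans one_pos (mem_Ioi.1 hx)))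
  have hmeas2 : AEStronglyMeasurable (fun t : ℝ => (t / f t) ^ (1/(2*s)))
      (volume.restrict (Ioi 1)) := by
    apply ContinuousOn.aestronglyMeasurable _ measurableSet_Ioi
    apply ContinuousOn.rpow_const
    · exact continuousOn_id.div (hcont.mono hsub01)
        (fun x hx => (hpos x (mem_Ioi.2 (lt_trans one_pos (mem_Ioi.1 hx)))).ne')
    · intro x _
      right
      positivity
  set ψ : ℝ → ℝ := fun u => ∫ t in Ioi (max u 1), 1 / Real.sqrt (F t) with hψ
  have hψanti : Antitone ψ := by
    intro u v huv
    exact setIntegral_mono_set (main _ (le_max_right u 1)).1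
      (Filter.Eventually.of_forall fun t => by positivity)
      (HasSubset.Subset.eventuallyLE (Ioi_subset_Ioi (max_le_max huv le_rfl)))
  have hψnonneg : ∀ u, 0 ≤ ψ u :=
    fun u => setIntegral_nonneg measurableSet_Ioi (fun t _ => by positivity)
  have hψpow_anti : Antitone (fun u => ψ u ^ (1/s)) := by
    intro u v huv
    exact Real.rpow_le_rpow (hψnonneg v) (hψanti huv) (by positivity)
  have hmeas1 : AEStronglyMeasurable (fun t => φ t ^ (1/s))
      (volume.restrict (Ioi 1)) := by
    apply (hψpow_anti.measurable.aestronglyMeasurable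
      (μ := volume.restrict (Ioi 1))).congr
    filter_upwards [ae_restrict_mem measurableSet_Ioi] with t ht
    have : ψ t = φ t := by
      rw [hψ, hφ]
      simp only [max_eq_left (le_of_lt (mem_Ioi.1 ht))]
    simp only [this]
  have hexp : ∀ t : ℝ, 1 < t → (t / f t) ^ (1/(2*s)) = (g t) ^ (1/s) := by
    intro t ht
    have ht0 : (0:ℝ) < t := lt_trans one_pos ht
    rw [hg]
    rw [← Real.rpow_mul (div_nonneg ht0.le (hpos t ht0).le)]
    congr 1
    rw [div_mul_div_comm, one_mul]
  have hnφ : ∀ t : ℝ, 1 < t → 0 ≤ φ t := by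
    intro t ht
    refine le_trans ?_ (hlow t ht.le)
    have ht0 : (0:ℝ) < t := lt_trans one_pos ht
    have : 0 ≤ g t := Real.rpow_nonneg (div_nonneg ht0.le (hpos t ht0).le) _
    positivity
  constructor
  · intro h1
    apply Integrable.mono' (h1.const_mul ((K₁ ^ (1/s))⁻¹)) hmeas2
    filter_upwards [ae_restrict_mem measurableSet_Ioi] with t ht
    have ht1 : (1:ℝ) < t := ht
    have ht0 : (0:ℝ) < t := lt_trans one_pos ht1
    have hgt : 0 ≤ g t := Real.rpow_nonneg (div_nonneg ht0.le (hpos t ht0).le) _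
    rw [Real.norm_eq_abs,
      abs_of_nonneg (Real.rpow_nonneg (div_nonneg ht0.le (hpos t ht0).le) _),
      hexp t ht1]
    have key : K₁ ^ (1/s) * (g t) ^ (1/s) ≤ φ t ^ (1/s) := by
      rw [← Real.mul_rpow hK₁pos.le hgt]
      exact Real.rpow_le_rpow (by positivity) (hlow t ht1.le) (by positivity)
    have hKp : 0 < K₁ ^ (1/s) := by positivity
    calc (g t) ^ (1/s) = (K₁ ^ (1/s))⁻¹ * (K₁ ^ (1/s) * (g t) ^ (1/s)) := by
          field_simp
      _ ≤ (K₁ ^ (1/s))⁻¹ * φ t ^ (1/s) :=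
          mul_le_mul_of_nonneg_left key (inv_nonneg.2 hKp.le)
  · intro h2
    apply Integrable.mono' (h2.const_mul (K₂ ^ (1/s))) hmeas1
    filter_upwards [ae_restrict_mem measurableSet_Ioi] with t ht
    have ht1 : (1:ℝ) < t := ht
    have ht0 : (0:ℝ) < t := lt_trans one_pos ht1
    have hgt : 0 ≤ g t := Real.rpow_nonneg (div_nonneg ht0.le (hpos t ht0).le) _
    rw [Real.norm_eq_abs, abs_of_nonneg (Real.rpow_nonneg (hnφ t ht1) _), hexp t ht1,
      ← Real.mul_rpow hK₂pos.le hgt]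
    exact Real.rpow_le_rpow (hnφ t ht1) (main t ht1.le).2 (by positivity)
end

section
/- Let ψ be the inverse of φ in the Keller–Osserman setup. Then 2/M ≤ v |ψ'(v)| / ψ(v) ≤ 2/m for all v > 0. -/
open Set Real MeasureTheory

theorem stmt_10 (f f' : ℝ → ℝ) (m M : ℝ) (hm : 0 < m) (hmM : m < M)
    (hcont : ContinuousOn f (Ici 0))
    (hderiv : ∀ t ∈ Ioi (0:ℝ), HasDerivAt f (f' t) t)
    (hmono : MonotoneOn f (Ici 0))
    (hf0 : f 0 = 0)
    (hpos : ∀ t ∈ Ioi (0:ℝ), 0 < f t)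
    (h : ∀ t ∈ Ioi (0:ℝ), (1 + m) * f t ≤ t * f' t ∧ t * f' t ≤ (1 + M) * f t)
    (F φ ψ ψ' : ℝ → ℝ) (hF : ∀ t, F t = ∫ τ in (0:ℝ)..t, f τ)
    (hφ : ∀ u, φ u = ∫ t in Ioi u, 1 / Real.sqrt (F t))
    (hψpos : ∀ v ∈ Ioi (0:ℝ), 0 < ψ v)
    (hinv1 : ∀ u ∈ Ioi (0:ℝ), ψ (φ u) = u)
    (hinv2 : ∀ v ∈ Ioi (0:ℝ), φ (ψ v) = v)
    (hψderiv : ∀ v ∈ Ioi (0:ℝ), HasDerivAt ψ (ψ' v) v)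
    (hψ' : ∀ v ∈ Ioi (0:ℝ), ψ' v = -Real.sqrt (F (ψ v))) :
    ∀ v ∈ Ioi (0:ℝ), 2 / M ≤ v * |ψ' v| / ψ v ∧ v * |ψ' v| / ψ v ≤ 2 / m := by
  have hM : 0 < M := hm.trans hmM
  -- basic facts
  have hint : ∀ t : ℝ, 0 ≤ t → IntervalIntegrable f volume 0 t := by
    intro t ht
    apply ContinuousOn.intervalIntegrable
    apply hcont.mono
    rw [uIcc_of_le ht]
    exact fun x hx => hx.1
  have hfc : ∀ t ∈ Ioi (0:ℝ), ContinuousAt f t := fun t ht => (hderiv t ht).continuousAt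
  have hFd : ∀ t ∈ Ioi (0:ℝ), HasDerivAt F (f t) t := by
    intro t ht
    have hfun : F = fun x => ∫ τ in (0:ℝ)..x, f τ := funext hF
    rw [hfun]
    exact intervalIntegral.integral_hasDerivAt_right (hint t (le_of_lt ht))
      (ContinuousAt.stronglyMeasurableAtFilter isOpen_Ioi hfc t ht) (hfc t ht)
  have hF0 : F 0 = 0 := by rw [hF]; simp
  have hFpos : ∀ t ∈ Ioi (0:ℝ), 0 < F t := by
    intro t ht
    rw [hF]
    exact intervalIntegral.intervalIntegral_pos_of_pos_on (hint t (le_of_lt ht))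
      (fun x hx => hpos x hx.1) ht
  have hFcont : ContinuousOn F (Ici 0) := by
    intro t ht
    have ht0 : (0:ℝ) ≤ t := ht
    have h1 : IntegrableOn f (uIcc 0 (t+1)) := by
      apply (hcont.mono ?_).integrableOn_compact isCompact_uIcc
      rw [uIcc_of_le (by linarith)]
      exact fun x hx => hx.1
    have h2 := intervalIntegral.continuousOn_primitive_interval h1
    have h3 : ContinuousWithinAt F (uIcc 0 (t+1)) t := by
      have hfun : F = fun x => ∫ τ in (0:ℝ)..x, f τ := funext hF
      rw [hfun]
      apply h2 t
      rw [uIcc_of_le (by linarith)]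
      exact ⟨ht, by linarith⟩
    apply h3.mono_of_mem_nhdsWithin
    rw [uIcc_of_le (by linarith)]
    apply Filter.mem_of_superset
      (Filter.inter_mem self_mem_nhdsWithin
        (mem_nhdsWithin_of_mem_nhds (Iio_mem_nhds (lt_add_one t))))
    exact fun x hx => ⟨hx.1, le_of_lt hx.2⟩
  have hkey1 : ∀ t ∈ Ioi (0:ℝ), (2+m) * F t ≤ t * f t := by
    intro t ht
    set G : ℝ → ℝ := fun x => x * f x - (2+m) * F x with hGdef
    have hGd : ∀ x ∈ Ioi (0:ℝ), HasDerivAt G (1 * f x + x * f' x - (2+m) * f x) x := by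
      intro x hx
      exact ((hasDerivAt_id x).mul (hderiv x hx)).sub ((hFd x hx).const_mul (2+m))
    have hGc : ContinuousOn G (Ici 0) :=
      (continuousOn_id.mul hcont).sub (continuousOn_const.mul hFcont)
    have hmonoG : MonotoneOn G (Ici 0) := by
      apply monotoneOn_of_deriv_nonneg (convex_Ici 0) hGc
      · intro x hx
        rw [interior_Ici] at hx
        exact (hGd x hx).differentiableAt.differentiableWithinAt
      · intro x hx
        rw [interior_Ici] at hx
        rw [(hGd x hx).deriv]
        have h1 := (h x hx).1
        linarith
    have h2 := hmonoG (self_mem_Ici) (le_of_lt (show (0:ℝ) < t from ht)) (le_of_lt ht)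
    simp only [hGdef, hf0, hF0, mul_zero, zero_mul, sub_zero] at h2
    linarith
  have hkey2 : ∀ t ∈ Ioi (0:ℝ), t * f t ≤ (2+M) * F t := by
    intro t ht
    set G : ℝ → ℝ := fun x => (2+M) * F x - x * f x with hGdef
    have hGd : ∀ x ∈ Ioi (0:ℝ), HasDerivAt G ((2+M) * f x - (1 * f x + x * f' x)) x := by
      intro x hx
      exact ((hFd x hx).const_mul (2+M)).sub ((hasDerivAt_id x).mul (hderiv x hx))
    have hGc : ContinuousOn G (Ici 0) :=
      (continuousOn_const.mul hFcont).sub (continuousOn_id.mul hcont)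
    have hmonoG : MonotoneOn G (Ici 0) := by
      apply monotoneOn_of_deriv_nonneg (convex_Ici 0) hGc
      · intro x hx
        rw [interior_Ici] at hx
        exact (hGd x hx).differentiableAt.differentiableWithinAt
      · intro x hx
        rw [interior_Ici] at hx
        rw [(hGd x hx).deriv]
        have h1 := (h x hx).2
        linarith
    have h2 := hmonoG (self_mem_Ici) (le_of_lt (show (0:ℝ) < t from ht)) (le_of_lt ht)
    simp only [hGdef, hf0, hF0, mul_zero, zero_mul, sub_zero] at h2
    linarith
  -- monotonicity of F t * t^(-(2+m)) and antitonicity of F t * t^(-(2+M))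
  have hKm : MonotoneOn (fun x => F x * x ^ (-(2+m) : ℝ)) (Ioi 0) := by
    apply monotoneOn_of_deriv_nonneg (convex_Ioi 0)
    · intro x hx
      exact ((hFd x hx).mul (Real.hasDerivAt_rpow_const
        (Or.inl (ne_of_gt hx)))).continuousAt.continuousWithinAt
    · intro x hx
      rw [interior_Ioi] at hx
      exact ((hFd x hx).mul (Real.hasDerivAt_rpow_const
        (Or.inl (ne_of_gt hx)))).differentiableAt.differentiableWithinAt
    · intro x hx
      rw [interior_Ioi] at hx
      rw [HasDerivAt.deriv (f := fun x => F x * x ^ (-(2+m) : ℝ))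
        ((hFd x hx).mul (Real.hasDerivAt_rpow_const (Or.inl (ne_of_gt hx))))]
      have hx0 : (0:ℝ) < x := hx
      have hsplit : x ^ (-(2+m) : ℝ) = x ^ (-(2+m) - 1 : ℝ) * x := by
        rw [← Real.rpow_add_one (ne_of_gt hx0)]
        norm_num
      have hp : (0:ℝ) ≤ x ^ (-(2+m) - 1 : ℝ) := Real.rpow_nonneg hx0.le _
      have h2 : 0 ≤ x ^ (-(2+m) - 1 : ℝ) * (x * f x - (2+m) * F x) :=
        mul_nonneg hp (by linarith [hkey1 x hx])
      rw [hsplit]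
      nlinarith [h2]
  have hKM : AntitoneOn (fun x => F x * x ^ (-(2+M) : ℝ)) (Ioi 0) := by
    apply antitoneOn_of_deriv_nonpos (convex_Ioi 0)
    · intro x hx
      exact ((hFd x hx).mul (Real.hasDerivAt_rpow_const
        (Or.inl (ne_of_gt hx)))).continuousAt.continuousWithinAt
    · intro x hx
      rw [interior_Ioi] at hx
      exact ((hFd x hx).mul (Real.hasDerivAt_rpow_const
        (Or.inl (ne_of_gt hx)))).differentiableAt.differentiableWithinAt
    · intro x hx
      rw [interior_Ioi] at hx
      rw [HasDerivAt.deriv (f := fun x => F x * x ^ (-(2+M) : ℝ))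
        ((hFd x hx).mul (Real.hasDerivAt_rpow_const (Or.inl (ne_of_gt hx))))]
      have hx0 : (0:ℝ) < x := hx
      have hsplit : x ^ (-(2+M) : ℝ) = x ^ (-(2+M) - 1 : ℝ) * x := by
        rw [← Real.rpow_add_one (ne_of_gt hx0)]
        norm_num
      have hp : (0:ℝ) ≤ x ^ (-(2+M) - 1 : ℝ) := Real.rpow_nonneg hx0.le _
      have h2 : 0 ≤ x ^ (-(2+M) - 1 : ℝ) * ((2+M) * F x - x * f x) :=
        mul_nonneg hp (by linarith [hkey2 x hx])
      rw [hsplit]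
      nlinarith [h2]
  have hsq : ∀ x : ℝ, 0 < x → ∀ a : ℝ, Real.sqrt (x ^ a) = x ^ (a/2) := by
    intro x hx a
    rw [Real.sqrt_eq_rpow, ← Real.rpow_mul hx.le]
    congr 1
    ring
  intro v hv
  have hv0 : (0:ℝ) < v := hv
  set u : ℝ := ψ v with hudef
  have hu0 : (0:ℝ) < u := hψpos v hv
  have hu0' : u ∈ Ioi (0:ℝ) := hu0
  have hFu : 0 < F u := hFpos u hu0'
  set S : ℝ := Real.sqrt (F u) with hSdef
  have hS : 0 < S := Real.sqrt_pos.2 hFu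
  have hSne : S ≠ 0 := ne_of_gt hS
  have hφuv : (∫ t in Ioi u, 1 / Real.sqrt (F t)) = v := by
    rw [← hφ u]; exact hinv2 v hv
  have hgint : IntegrableOn (fun t => 1 / Real.sqrt (F t)) (Ioi u) := by
    by_contra hc
    rw [MeasureTheory.integral_undef hc] at hφuv
    exact (ne_of_gt hv0) hφuv.symm
  -- upper bound: v ≤ (2/m) * (u / S)
  set p : ℝ := (2+m)/2 with hpdef
  have hp1 : 1 < p := by rw [hpdef]; linarith
  have hub : v ≤ (2/m) * (u / S) := by
    have hb : ∀ t ∈ Ioi u, 1 / Real.sqrt (F t) ≤ (u ^ p / S) * t ^ (-p) := by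
      intro t ht
      have ht0 : (0:ℝ) < t := lt_trans hu0 ht
      have hK := hKm hu0' (show t ∈ Ioi (0:ℝ) from ht0) (le_of_lt ht)
      have h1 : F u * u ^ (-(2+m):ℝ) * t ^ ((2+m):ℝ) ≤ F t := by
        have h2 : F u * u ^ (-(2+m):ℝ) * t ^ ((2+m):ℝ) ≤ F t * t ^ (-(2+m):ℝ) * t ^ ((2+m):ℝ) :=
          mul_le_mul_of_nonneg_right hK (Real.rpow_nonneg ht0.le _)
        rwa [mul_assoc (F t), ← Real.rpow_add ht0, show (-(2+m) + (2+m) : ℝ) = 0 by ring,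
          Real.rpow_zero, mul_one] at h2
      have h3 : S * u ^ (-p) * t ^ p ≤ Real.sqrt (F t) := by
        have h4 := Real.sqrt_le_sqrt h1
        rw [Real.sqrt_mul (mul_nonneg hFu.le (Real.rpow_nonneg hu0.le _)),
          Real.sqrt_mul hFu.le, hsq u hu0, hsq t ht0, show ((-(2+m)):ℝ)/2 = -p by
            rw [hpdef]; ring, show ((2+m):ℝ)/2 = p from rfl] at h4
        exact h4
      have hpos3 : 0 < S * u ^ (-p) * t ^ p := by positivity
      have h5 := one_div_le_one_div_of_le hpos3 h3
      refine h5.trans (le_of_eq ?_)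
      rw [Real.rpow_neg hu0.le, Real.rpow_neg ht0.le]
      have hupne : u ^ p ≠ 0 := ne_of_gt (Real.rpow_pos_of_pos hu0 _)
      have htpne : t ^ p ≠ 0 := ne_of_gt (Real.rpow_pos_of_pos ht0 _)
      field_simp
    have hrint : IntegrableOn (fun t : ℝ => (u ^ p / S) * t ^ (-p)) (Ioi u) :=
      (integrableOn_Ioi_rpow_of_lt (by linarith : -p < -1) hu0).const_mul _
    have hmon := setIntegral_mono_on hgint hrint measurableSet_Ioi hb
    rw [hφuv] at hmon
    refine hmon.trans (le_of_eq ?_)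
    rw [MeasureTheory.integral_const_mul, integral_Ioi_rpow_of_lt (by linarith : -p < -1) hu0]
    have hupu : u ^ p * u ^ (-p+1) = u := by
      rw [← Real.rpow_add hu0, show p + (-p+1) = 1 by ring, Real.rpow_one]
    have hne1 : (-p+1 : ℝ) ≠ 0 := by intro hc; rw [hpdef] at hc; linarith [hc]
    calc (u ^ p / S) * (-u ^ (-p+1) / (-p+1))
        = (u ^ p * u ^ (-p+1)) * (-1 / (-p + 1)) / S := by ring
      _ = u * (-1/(-p+1)) / S := by rw [hupu]
      _ = (2/m) * (u/S) := by
          have hc1 : (-1:ℝ)/(-p+1) = 2/m := by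
            rw [hpdef]
            rw [div_eq_div_iff (by linarith) (by linarith)]
            ring
          rw [hc1]; ring
  -- lower bound: (2/M) * (u / S) ≤ v
  set q : ℝ := (2+M)/2 with hqdef
  have hq1 : 1 < q := by rw [hqdef]; linarith
  have hlb : (2/M) * (u / S) ≤ v := by
    have hb : ∀ t ∈ Ioi u, (u ^ q / S) * t ^ (-q) ≤ 1 / Real.sqrt (F t) := by
      intro t ht
      have ht0 : (0:ℝ) < t := lt_trans hu0 ht
      have hFt : 0 < F t := hFpos t ht0
      have hK := hKM hu0' (show t ∈ Ioi (0:ℝ) from ht0) (le_of_lt ht)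
      have h1 : F t ≤ F u * u ^ (-(2+M):ℝ) * t ^ ((2+M):ℝ) := by
        have h2 : F t * t ^ (-(2+M):ℝ) * t ^ ((2+M):ℝ) ≤ F u * u ^ (-(2+M):ℝ) * t ^ ((2+M):ℝ) :=
          mul_le_mul_of_nonneg_right hK (Real.rpow_nonneg ht0.le _)
        rwa [mul_assoc (F t), ← Real.rpow_add ht0, show (-(2+M) + (2+M) : ℝ) = 0 by ring,
          Real.rpow_zero, mul_one] at h2
      have h3 : Real.sqrt (F t) ≤ S * u ^ (-q) * t ^ q := by
        have h4 := Real.sqrt_le_sqrt h1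
        rw [Real.sqrt_mul (mul_nonneg hFu.le (Real.rpow_nonneg hu0.le _)),
          Real.sqrt_mul hFu.le, hsq u hu0, hsq t ht0, show ((-(2+M)):ℝ)/2 = -q by
            rw [hqdef]; ring, show ((2+M):ℝ)/2 = q from rfl] at h4
        exact h4
      have hposFt : 0 < Real.sqrt (F t) := Real.sqrt_pos.2 hFt
      have h5 := one_div_le_one_div_of_le hposFt h3
      refine le_trans (le_of_eq ?_) h5
      rw [Real.rpow_neg hu0.le, Real.rpow_neg ht0.le]
      have hupne : u ^ q ≠ 0 := ne_of_gt (Real.rpow_pos_of_pos hu0 _)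
      have htpne : t ^ q ≠ 0 := ne_of_gt (Real.rpow_pos_of_pos ht0 _)
      field_simp
    have hrint : IntegrableOn (fun t : ℝ => (u ^ q / S) * t ^ (-q)) (Ioi u) :=
      (integrableOn_Ioi_rpow_of_lt (by linarith : -q < -1) hu0).const_mul _
    have hmon := setIntegral_mono_on hrint hgint measurableSet_Ioi hb
    rw [hφuv] at hmon
    refine le_trans (le_of_eq ?_) hmon
    rw [MeasureTheory.integral_const_mul, integral_Ioi_rpow_of_lt (by linarith : -q < -1) hu0]
    have hupu : u ^ q * u ^ (-q+1) = u := by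
      rw [← Real.rpow_add hu0, show q + (-q+1) = 1 by ring, Real.rpow_one]
    calc (2/M) * (u/S)
        = u * (-1/(-q+1)) / S := by
          have hc1 : (-1:ℝ)/(-q+1) = 2/M := by
            rw [hqdef]
            rw [div_eq_div_iff (by linarith) (by linarith)]
            ring
          rw [hc1]; ring
      _ = (u ^ q * u ^ (-q+1)) * (-1 / (-q + 1)) / S := by rw [hupu]
      _ = (u ^ q / S) * (-u ^ (-q+1) / (-q+1)) := by ring
  -- assemble
  have habs : |ψ' v| = S := by
    rw [hψ' v hv, abs_neg, abs_of_nonneg (Real.sqrt_nonneg _), hSdef, hudef]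
  rw [habs]
  constructor
  · have h9 : (2/M) * u ≤ v * S := by
      have h10 := mul_le_mul_of_nonneg_right hlb hS.le
      rwa [mul_assoc, div_mul_cancel₀ _ hSne] at h10
    exact (le_div_iff₀ hu0).2 h9
  · have h9 : v * S ≤ (2/m) * u := by
      have h10 := mul_le_mul_of_nonneg_right hub hS.le
      rwa [mul_assoc, div_mul_cancel₀ _ hSne] at h10
    exact (div_le_iff₀ hu0).2 h9
end

section
/- Suppose f is increasing, f(t) > 0 for t > 0, and ∫_{t₀}^∞ f(t) t^{-2/(1-s)} dt < ∞ for some t₀ > 0, where s ∈ (0,1). Then f(u) / u^{(1+s)/(1-s)} → 0 as u → +∞. -/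
open Set Real MeasureTheory Filter

theorem stmt_11 (f : ℝ → ℝ) (s t₀ : ℝ) (hs : s ∈ Ioo (0:ℝ) 1) (ht₀ : 0 < t₀)
    (hmono : Monotone f)
    (hpos : ∀ t ∈ Ioi (0:ℝ), 0 < f t)
    (hint : IntegrableOn (fun t => f t * t ^ (-2 / (1 - s))) (Ioi t₀)) :
    Tendsto (fun u => f u / u ^ ((1 + s) / (1 - s))) atTop (nhds 0) := by
  obtain ⟨hs0, hs1⟩ := hs
  have h1s : (0:ℝ) < 1 - s := by linarith
  set p : ℝ := 2 / (1 - s) with hp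
  have hp0 : 0 < p := by positivity
  set q : ℝ := (1 + s) / (1 - s) with hq
  have hpq : 1 - p = -q := by rw [hp, hq]; field_simp; ring
  set g : ℝ → ℝ := fun t => f t * t ^ (-p) with hg
  have hgint : IntegrableOn g (Ioi t₀) := by
    have : (-2 : ℝ) / (1 - s) = -p := by rw [hp]; ring
    simpa [hg, this] using hint
  set L : ℝ := ∫ t in Ioi t₀, g t with hL
  have hF : Tendsto (fun u => ∫ t in t₀..u, g t) atTop (nhds L) :=
    intervalIntegral_tendsto_integral_Ioi t₀ hgint tendsto_id
  have h2u : Tendsto (fun u : ℝ => 2 * u) atTop atTop :=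
    tendsto_id.const_mul_atTop two_pos
  have hF2 : Tendsto (fun u => ∫ t in t₀..(2*u), g t) atTop (nhds L) := hF.comp h2u
  have hdiff : Tendsto (fun u => (∫ t in t₀..(2*u), g t) - ∫ t in t₀..u, g t)
      atTop (nhds 0) := by
    simpa using hF2.sub hF
  have hlim : Tendsto (fun u => (2:ℝ)^p * ((∫ t in t₀..(2*u), g t) - ∫ t in t₀..u, g t))
      atTop (nhds 0) := by
    simpa using hdiff.const_mul ((2:ℝ)^p)
  apply tendsto_of_tendsto_of_tendsto_of_le_of_le' tendsto_const_nhds hlim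
  · filter_upwards [eventually_gt_atTop (0:ℝ)] with u hu
    have hfu := hpos u hu
    positivity
  · filter_upwards [eventually_gt_atTop (max t₀ 1)] with u hu
    have ht : t₀ < u := lt_of_le_of_lt (le_max_left _ _) hu
    have hu1 : (1:ℝ) < u := lt_of_le_of_lt (le_max_right _ _) hu
    have hu0 : (0:ℝ) < u := lt_trans one_pos hu1
    have hu2 : u ≤ 2 * u := by linarith
    have ht2 : t₀ ≤ 2 * u := by linarith
    -- interval integrability
    have hint1 : IntervalIntegrable g volume t₀ u :=
      (intervalIntegrable_iff_integrableOn_Ioc_of_le ht.le).2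
        (hgint.mono_set Ioc_subset_Ioi_self)
    have hint2 : IntervalIntegrable g volume t₀ (2*u) :=
      (intervalIntegrable_iff_integrableOn_Ioc_of_le ht2).2
        (hgint.mono_set Ioc_subset_Ioi_self)
    have hint3 : IntervalIntegrable g volume u (2*u) :=
      (intervalIntegrable_iff_integrableOn_Ioc_of_le hu2).2
        (hgint.mono_set (fun x hx => lt_of_le_of_lt ht.le hx.1))
    have hsub : (∫ t in t₀..(2*u), g t) - ∫ t in t₀..u, g t = ∫ t in u..(2*u), g t :=
      intervalIntegral.integral_interval_sub_left hint2 hint1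
    rw [hsub]
    -- lower bound on the integral
    have hconst : IntervalIntegrable (fun _ : ℝ => f u * (2*u)^(-p)) volume u (2*u) :=
      intervalIntegrable_const
    have hmono_int : ∫ t in u..(2*u), (f u * (2*u)^(-p)) ≤ ∫ t in u..(2*u), g t := by
      apply intervalIntegral.integral_mono_on hu2 hconst hint3
      intro t htmem
      have ht0 : 0 < t := lt_of_lt_of_le hu0 htmem.1
      have hft : f u ≤ f t := hmono htmem.1
      have hrp : (2*u)^(-p) ≤ t^(-p) := by
        apply Real.rpow_le_rpow_of_nonpos ht0 htmem.2 (by linarith)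
      exact mul_le_mul hft hrp (Real.rpow_nonneg (by linarith) _)
        (le_trans (hpos u hu0).le hft)
    have hcval : ∫ t in u..(2*u), (f u * (2*u)^(-p)) = u * (f u * (2*u)^(-p)) := by
      rw [intervalIntegral.integral_const, smul_eq_mul]
      ring
    have hkey : u * (f u * (2*u)^(-p)) = (2:ℝ)^(-p) * (f u / u ^ q) := by
      rw [Real.mul_rpow two_pos.le hu0.le]
      have h1 : u * u^(-p) = u^(1-p) := by
        rw [sub_eq_add_neg, Real.rpow_add hu0, Real.rpow_one]
      have h2 : u^(1-p) = (u^q)⁻¹ := by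
        rw [hpq, Real.rpow_neg hu0.le]
      calc u * (f u * ((2:ℝ)^(-p) * u^(-p)))
          = (2:ℝ)^(-p) * (f u * (u * u^(-p))) := by ring
        _ = (2:ℝ)^(-p) * (f u / u^q) := by rw [h1, h2, div_eq_mul_inv]
    have h2p : (2:ℝ)^p * (2:ℝ)^(-p) = 1 := by
      rw [← Real.rpow_add two_pos]; simp
    calc f u / u ^ q = (2:ℝ)^p * ((2:ℝ)^(-p) * (f u / u ^ q)) := by
          rw [← mul_assoc, h2p, one_mul]
      _ = (2:ℝ)^p * (u * (f u * (2*u)^(-p))) := by rw [hkey]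
      _ = (2:ℝ)^p * ∫ t in u..(2*u), (f u * (2*u)^(-p)) := by rw [hcval]
      _ ≤ (2:ℝ)^p * ∫ t in u..(2*u), g t := by
          apply mul_le_mul_of_nonneg_left hmono_int (Real.rpow_nonneg two_pos.le _)
end
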